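/- arXiv:1003.0118 — 2 statements merged into one kernel-verified Lean document; each statement's English description precedes it below -/
import Mathlib

section
/- In a stochastic BPA game with simple target set T, the winning region of player Diamond for keeping the probability of reaching T below 1 satisfies W_Diamond(T,<1) = C*AΓ* ∪ C*, where A = W_Diamond(T_ε,<1) ∩ Γ and C = W_Diamond(T,<1) ∩ Γ. -/
open scoped Classical

/-- A stochastic BPA game: finite stack alphabet `Γ`, rules `X → α` with
`|α| ≤ 2`, symbols partitioned among player Box, player Diamond, and
probabilistic symbols, the latter carrying positive rational distributions
over their rules. -/
structure BPA (Γ : Type*) [Fintype Γ] where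
  rule : Γ → List Γ → Prop
  rule_len : ∀ X α, rule X α → α.length ≤ 2
  rule_total : ∀ X, ∃ α, rule X α
  isBox : Γ → Prop
  isDiamond : Γ → Prop
  isCirc : Γ → Prop
  cover : ∀ X, isBox X ∨ isDiamond X ∨ isCirc X
  disjBD : ∀ X, ¬ (isBox X ∧ isDiamond X)
  disjBC : ∀ X, ¬ (isBox X ∧ isCirc X)
  disjDC : ∀ X, ¬ (isDiamond X ∧ isCirc X)
  prob : Γ → List Γ → ℝ
  prob_nonneg : ∀ X α, 0 ≤ prob X α
  prob_rat : ∀ X α, ∃ q : ℚ, prob X α = (q : ℝ)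
  prob_supp : ∀ X α, isCirc X → (0 < prob X α ↔ rule X α)
  prob_sum : ∀ X, isCirc X → ∑' α, prob X α = 1

variable {Γ : Type*} [Fintype Γ]

/-- A history-dependent randomized strategy for the player owning the symbols
satisfying `own` in the stochastic game induced by a BPA game: to every history
(sequence of configurations) and current configuration `X :: β` with `own X`,
it assigns a probability distribution on the applicable rules. -/
structure BPA.Strat (Δ : BPA Γ) (own : Γ → Prop) where
  f : List (List Γ) → List Γ → List Γ → ℝ
  nonneg : ∀ w c α, 0 ≤ f w c α
  supp : ∀ w X β α, own X → f w (X :: β) α ≠ 0 → Δ.rule X α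
  sum_one : ∀ w X β, own X → ∑' α, f w (X :: β) α = 1

/-- The distribution on rules chosen at configuration `c` after history `w`. -/
noncomputable def BPA.choice (Δ : BPA Γ) (σ : Δ.Strat Δ.isBox)
    (π : Δ.Strat Δ.isDiamond) (w : List (List Γ)) (c : List Γ) (α : List Γ) : ℝ :=
  match c with
  | [] => 0
  | X :: _ => if Δ.isBox X then σ.f w c α else if Δ.isDiamond X then π.f w c α
      else Δ.prob X α

/-- One-step transition probability between configurations in the play
induced by a BPA game (the empty configuration `ε` loops with probability 1,
and `X :: β` moves to `α ++ β` for a rule `X → α`). -/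
noncomputable def BPA.stepP (Δ : BPA Γ) (σ : Δ.Strat Δ.isBox)
    (π : Δ.Strat Δ.isDiamond) (w : List (List Γ)) (c c' : List Γ) : ℝ :=
  match c with
  | [] => if c' = [] then 1 else 0
  | X :: β => ∑' α : List Γ,
      if α ++ β = c' ∧ Δ.rule X α then Δ.choice σ π w (X :: β) α else 0

/-- Probability of reaching `T` from configuration `c` within at most `n`
transitions, after history `w`. -/
noncomputable def BPA.reachN (Δ : BPA Γ) (σ : Δ.Strat Δ.isBox)
    (π : Δ.Strat Δ.isDiamond) (T : Set (List Γ)) :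
    ℕ → List (List Γ) → List Γ → ℝ
  | 0, _, c => if c ∈ T then 1 else 0
  | n+1, w, c => if c ∈ T then 1 else
      ∑' c', Δ.stepP σ π w c c' * BPA.reachN Δ σ π T n (w ++ [c]) c'

/-- Probability `P_c^{σ,π}(Reach(T))` of reaching `T` from configuration `c`. -/
noncomputable def BPA.reachP (Δ : BPA Γ) (σ : Δ.Strat Δ.isBox)
    (π : Δ.Strat Δ.isDiamond) (T : Set (List Γ)) (c : List Γ) : ℝ :=
  ⨆ n, Δ.reachN σ π T n [] c

/-- The winning region `W_Box(T, >0)`. -/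
def BPA.WBoxPos (Δ : BPA Γ) (T : Set (List Γ)) : Set (List Γ) :=
  {c | ∃ σ : Δ.Strat Δ.isBox, ∀ π : Δ.Strat Δ.isDiamond, 0 < Δ.reachP σ π T c}

/-- The winning region `W_Box(T, =1)`. -/
def BPA.WBoxOne (Δ : BPA Γ) (T : Set (List Γ)) : Set (List Γ) :=
  {c | ∃ σ : Δ.Strat Δ.isBox, ∀ π : Δ.Strat Δ.isDiamond, Δ.reachP σ π T c = 1}

/-- The winning region `W_Diamond(T, =0)`. -/
def BPA.WDiaZero (Δ : BPA Γ) (T : Set (List Γ)) : Set (List Γ) :=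
  {c | ∃ π : Δ.Strat Δ.isDiamond, ∀ σ : Δ.Strat Δ.isBox, Δ.reachP σ π T c = 0}

/-- The winning region `W_Diamond(T, <1)`. -/
def BPA.WDiaLtOne (Δ : BPA Γ) (T : Set (List Γ)) : Set (List Γ) :=
  {c | ∃ π : Δ.Strat Δ.isDiamond, ∀ σ : Δ.Strat Δ.isBox, Δ.reachP σ π T c < 1}

/-- The language `{[X] : X ∈ S}` of one-letter words over a set of symbols. -/
def symLang (S : Set Γ) : Language Γ := {c | ∃ X ∈ S, c = [X]}

/-- The simple set of target configurations `S·Γ*` determined by the set of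
symbols `S`: membership depends only on the top stack symbol, and `ε ∉ S·Γ*`. -/
def topLang (S : Set Γ) : Language Γ := {c | ∃ X β, c = X :: β ∧ X ∈ S}


section Helpers

open Filter Topology

variable {ι : Type*}

lemma bddAbove_of_le {f : ℕ → ℝ} {c : ℝ} (h : ∀ n, f n ≤ c) : BddAbove (Set.range f) :=
  ⟨c, by rintro x ⟨n, rfl⟩; exact h n⟩

lemma bddAbove_of_le_one {f : ℕ → ℝ} (h : ∀ n, f n ≤ 1) : BddAbove (Set.range f) :=
  bddAbove_of_le h

lemma ciSup_add_ciSup_of_monotone {a b : ℕ → ℝ} (ha : Monotone a) (hb : Monotone b)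
    (ha1 : ∀ n, a n ≤ 1) (hb1 : ∀ n, b n ≤ 1) :
    (⨆ n, (a n + b n)) = (⨆ n, a n) + ⨆ n, b n := by
  have hab : BddAbove (Set.range a) := bddAbove_of_le_one ha1
  have hbb : BddAbove (Set.range b) := bddAbove_of_le_one hb1
  have h1 : Tendsto a atTop (nhds (⨆ n, a n)) := tendsto_atTop_ciSup ha hab
  have h2 : Tendsto b atTop (nhds (⨆ n, b n)) := tendsto_atTop_ciSup hb hbb
  have h3 : Tendsto (fun n => a n + b n) atTop (nhds ((⨆ n, a n) + ⨆ n, b n)) := h1.add h2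
  have h4 : Tendsto (fun n => a n + b n) atTop (nhds (⨆ n, (a n + b n))) :=
    tendsto_atTop_ciSup (fun m n hmn => add_le_add (ha hmn) (hb hmn))
      (bddAbove_of_le (c := 2) (by intro n; have := add_le_add (ha1 n) (hb1 n); linarith))
  exact tendsto_nhds_unique h4 h3

/-- Monotone convergence for `tsum` over an arbitrary index type, in `ℝ`. -/
lemma tsum_mul_iSup_eq {g : ι → ℝ} (f : ℕ → ι → ℝ)
    (hg0 : ∀ i, 0 ≤ g i) (hgs : Summable g)
    (hf0 : ∀ n i, 0 ≤ f n i) (hf1 : ∀ n i, f n i ≤ 1)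
    (hmono : ∀ i, Monotone fun n => f n i) :
    ∑' i, g i * (⨆ n, f n i) = ⨆ n, ∑' i, g i * f n i := by
  set F : ι → ℝ := fun i => ⨆ n, f n i with hF
  have hFb : ∀ i, BddAbove (Set.range fun n => f n i) := fun i => bddAbove_of_le_one (fun n => hf1 n i)
  have hF0 : ∀ i, 0 ≤ F i := fun i => le_trans (hf0 0 i) (le_ciSup (hFb i) 0)
  have hF1 : ∀ i, F i ≤ 1 := fun i => ciSup_le fun n => hf1 n i
  have hgFs : Summable fun i => g i * F i :=
    Summable.of_nonneg_of_le (fun i => mul_nonneg (hg0 i) (hF0 i))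
      (fun i => by have := mul_le_mul_of_nonneg_left (hF1 i) (hg0 i); simpa using this) hgs
  have hgfs : ∀ n, Summable fun i => g i * f n i := fun n =>
    Summable.of_nonneg_of_le (fun i => mul_nonneg (hg0 i) (hf0 n i))
      (fun i => by have := mul_le_mul_of_nonneg_left (hf1 n i) (hg0 i); simpa using this) hgs
  set S : ℕ → ℝ := fun n => ∑' i, g i * f n i with hS
  have hSb : ∀ n, S n ≤ ∑' i, g i * F i := fun n =>
    Summable.tsum_le_tsum (fun i => mul_le_mul_of_nonneg_left (le_ciSup (hFb i) n) (hg0 i)) (hgfs n) hgFs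
  apply le_antisymm
  · -- tsum ≤ sup
    apply Summable.tsum_le_of_sum_le hgFs
    intro s
    have hfin : ∀ n, ∑ i ∈ s, g i * f n i ≤ S n := fun n =>
      Summable.sum_le_tsum s (fun i _ => mul_nonneg (hg0 i) (hf0 n i)) (hgfs n)
    have hSmono : Monotone S := fun m n hmn =>
      Summable.tsum_le_tsum (fun i => mul_le_mul_of_nonneg_left (hmono i hmn) (hg0 i)) (hgfs m) (hgfs n)
    have hSbdd : BddAbove (Set.range S) := ⟨∑' i, g i * F i, by rintro x ⟨n, rfl⟩; exact hSb n⟩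
    have htend : Tendsto (fun n => ∑ i ∈ s, g i * f n i) atTop (nhds (∑ i ∈ s, g i * F i)) := by
      apply tendsto_finset_sum
      intro i _
      exact (tendsto_atTop_ciSup (hmono i) (hFb i)).const_mul _
    have : ∑ i ∈ s, g i * F i ≤ ⨆ n, S n :=
      le_of_tendsto htend (Filter.Eventually.of_forall fun n =>
        le_trans (hfin n) (le_ciSup hSbdd n))
    exact this
  · exact ciSup_le hSb

end Helpers
namespace BPA

variable {Γ : Type*} [Fintype Γ] (Δ : BPA Γ) (σ : Δ.Strat Δ.isBox) (π : Δ.Strat Δ.isDiamond)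

/-- A default (deterministic) strategy, choosing an arbitrary applicable rule. -/
noncomputable def defaultStrat (own : Γ → Prop) : Δ.Strat own where
  f := fun _ c α => match c with
    | [] => 0
    | X :: _ => if α = Classical.choose (Δ.rule_total X) then 1 else 0
  nonneg := by intro w c α; cases c with
    | nil => simp
    | cons X t => dsimp only; split <;> norm_num
  supp := by
    intro w X β α _ h
    dsimp only at h
    rcases eq_or_ne α (Classical.choose (Δ.rule_total X)) with rfl | hne
    · exact Classical.choose_spec (Δ.rule_total X)
    · simp [hne] at h
  sum_one := by
    intro w X β _
    exact tsum_ite_eq (Classical.choose (Δ.rule_total X)) (fun _ => (1 : ℝ))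

lemma choice_cons (w : List (List Γ)) (X : Γ) (t α : List Γ) :
    Δ.choice σ π w (X :: t) α = if Δ.isBox X then σ.f w (X :: t) α
      else if Δ.isDiamond X then π.f w (X :: t) α else Δ.prob X α := rfl

lemma choice_nil (w : List (List Γ)) (α : List Γ) : Δ.choice σ π w [] α = 0 := rfl

lemma choice_nonneg (w : List (List Γ)) (c α : List Γ) : 0 ≤ Δ.choice σ π w c α := by
  cases c with
  | nil => simp [BPA.choice]
  | cons X t =>
    rw [choice_cons]
    split
    · exact σ.nonneg _ _ _
    · split
      · exact π.nonneg _ _ _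
      · exact Δ.prob_nonneg _ _

lemma choice_eq_zero_of_not_rule {X : Γ} {α : List Γ} (t : List Γ) (w : List (List Γ))
    (h : ¬ Δ.rule X α) : Δ.choice σ π w (X :: t) α = 0 := by
  rw [choice_cons]
  split
  · rename_i hb
    by_contra hne
    exact h (σ.supp _ _ _ _ hb hne)
  · split
    · rename_i _ hd
      by_contra hne
      exact h (π.supp _ _ _ _ hd hne)
    · rename_i hb hd
      have hc : Δ.isCirc X := by rcases Δ.cover X with h1 | h1 | h1 <;> tauto
      have h2 : ¬ (0 < Δ.prob X α) := fun hp => h ((Δ.prob_supp X α hc).mp hp)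
      have h3 := Δ.prob_nonneg X α
      rcases eq_or_lt_of_le h3 with he | hl
      · exact he.symm
      · exact absurd hl h2

lemma choice_tsum_one (w : List (List Γ)) (X : Γ) (t : List Γ) :
    ∑' α, Δ.choice σ π w (X :: t) α = 1 := by
  rcases Δ.cover X with hb | hd | hc
  · have : ∀ α, Δ.choice σ π w (X :: t) α = σ.f w (X :: t) α := by
      intro α; rw [choice_cons]; simp [hb]
    rw [tsum_congr this]; exact σ.sum_one _ _ _ hb
  · have hnb : ¬ Δ.isBox X := fun h => Δ.disjBD X ⟨h, hd⟩
    have : ∀ α, Δ.choice σ π w (X :: t) α = π.f w (X :: t) α := by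
      intro α; rw [choice_cons]; simp [hnb, hd]
    rw [tsum_congr this]; exact π.sum_one _ _ _ hd
  · have hnb : ¬ Δ.isBox X := fun h => Δ.disjBC X ⟨h, hc⟩
    have hnd : ¬ Δ.isDiamond X := fun h => Δ.disjDC X ⟨h, hc⟩
    have : ∀ α, Δ.choice σ π w (X :: t) α = Δ.prob X α := by
      intro α; rw [choice_cons]; simp [hnb, hnd]
    rw [tsum_congr this]; exact Δ.prob_sum X hc

lemma choice_summable (w : List (List Γ)) (X : Γ) (t : List Γ) :
    Summable (Δ.choice σ π w (X :: t)) := by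
  by_contra h
  have := tsum_eq_zero_of_not_summable h
  rw [choice_tsum_one] at this
  norm_num at this

end BPA
namespace BPA

variable {Γ : Type*} [Fintype Γ] (Δ : BPA Γ) (σ : Δ.Strat Δ.isBox) (π : Δ.Strat Δ.isDiamond)

lemma stepP_nil (w : List (List Γ)) (c' : List Γ) :
    Δ.stepP σ π w [] c' = if c' = [] then 1 else 0 := rfl

lemma stepP_cons (w : List (List Γ)) (X : Γ) (t c' : List Γ) :
    Δ.stepP σ π w (X :: t) c' = ∑' α : List Γ,
      if α ++ t = c' ∧ Δ.rule X α then Δ.choice σ π w (X :: t) α else 0 := rfl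

lemma stepP_nonneg (w : List (List Γ)) (c c' : List Γ) : 0 ≤ Δ.stepP σ π w c c' := by
  cases c with
  | nil => rw [stepP_nil]; split <;> norm_num
  | cons X t =>
    rw [stepP_cons]
    refine tsum_nonneg fun α => ?_
    split
    · exact choice_nonneg Δ σ π _ _ _
    · exact le_refl 0

lemma stepP_cons_append (w : List (List Γ)) (X : Γ) (t α₀ : List Γ) :
    Δ.stepP σ π w (X :: t) (α₀ ++ t) = if Δ.rule X α₀ then Δ.choice σ π w (X :: t) α₀ else 0 := by
  rw [stepP_cons]
  rw [tsum_eq_single α₀ (fun α hne => by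
    have : ¬ (α ++ t = α₀ ++ t ∧ Δ.rule X α) := by
      rintro ⟨h1, -⟩
      exact hne (List.append_cancel_right h1)
    rw [if_neg this])]
  by_cases hr : Δ.rule X α₀
  · simp [hr]
  · simp [hr]

lemma stepP_cons_eq_zero (w : List (List Γ)) (X : Γ) (t c' : List Γ)
    (h : ∀ α₀, α₀ ++ t ≠ c') : Δ.stepP σ π w (X :: t) c' = 0 := by
  rw [stepP_cons]
  have : ∀ α : List Γ, (if α ++ t = c' ∧ Δ.rule X α then Δ.choice σ π w (X :: t) α else 0) = 0 := by
    intro α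
    have : ¬ (α ++ t = c' ∧ Δ.rule X α) := by rintro ⟨h1, -⟩; exact h α h1
    simp [this]
  rw [tsum_congr this, tsum_zero]

lemma stepP_cons_append_le_choice (w : List (List Γ)) (X : Γ) (t α₀ : List Γ) :
    Δ.stepP σ π w (X :: t) (α₀ ++ t) ≤ Δ.choice σ π w (X :: t) α₀ := by
  rw [stepP_cons_append]
  split
  · exact le_refl _
  · exact choice_nonneg Δ σ π _ _ _

lemma stepP_support (w : List (List Γ)) (X : Γ) (t : List Γ) :
    (Function.support fun c' => Δ.stepP σ π w (X :: t) c') ⊆ Set.range (· ++ t) := by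
  intro c' hc'
  by_contra hr
  refine hc' (stepP_cons_eq_zero Δ σ π w X t c' fun α₀ he => hr ?_)
  exact ⟨α₀, he⟩

omit [Fintype Γ] in
lemma append_injective (t : List Γ) : Function.Injective (· ++ t) := by
  intro a b h
  exact List.append_cancel_right h

lemma stepP_hasSum (w : List (List Γ)) (c : List Γ) :
    HasSum (fun c' => Δ.stepP σ π w c c') 1 := by
  cases c with
  | nil =>
    have : (fun c' => Δ.stepP σ π w [] c') = fun c' => if c' = ([] : List Γ) then (1:ℝ) else 0 := by
      funext c'; exact stepP_nil Δ σ π w c'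
    rw [this]
    exact hasSum_ite_eq ([] : List Γ) 1
  | cons X t =>
    have hcs : Summable (Δ.choice σ π w (X :: t)) := choice_summable Δ σ π w X t
    have hcomp : ∀ α₀ : List Γ, Δ.stepP σ π w (X :: t) (α₀ ++ t) = Δ.choice σ π w (X :: t) α₀ := by
      intro α₀
      rw [stepP_cons_append]
      split
      · rfl
      · exact (choice_eq_zero_of_not_rule Δ σ π t w (by assumption)).symm
    have hsum : HasSum (fun α₀ => Δ.stepP σ π w (X :: t) (α₀ ++ t)) 1 := by
      have h1 : HasSum (Δ.choice σ π w (X :: t)) 1 := by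
        have := hcs.hasSum
        rwa [choice_tsum_one Δ σ π w X t] at this
      exact h1.congr_fun fun α₀ => hcomp α₀
    have hi := append_injective (Γ := Γ) t
    have hs := stepP_support Δ σ π w X t
    exact (Function.Injective.hasSum_iff hi (fun x hx => by
      by_contra h0
      exact hx (hs h0))).mp hsum

lemma stepP_summable (w : List (List Γ)) (c : List Γ) :
    Summable (fun c' => Δ.stepP σ π w c c') := (stepP_hasSum Δ σ π w c).summable

lemma stepP_tsum_one (w : List (List Γ)) (c : List Γ) :
    ∑' c', Δ.stepP σ π w c c' = 1 := (stepP_hasSum Δ σ π w c).tsum_eq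

/-- Summability of one-step sums against a `[0,1]`-valued function. -/
lemma step_mul_summable (w : List (List Γ)) (c : List Γ) {h : List Γ → ℝ}
    (h0 : ∀ c', 0 ≤ h c') (h1 : ∀ c', h c' ≤ 1) :
    Summable (fun c' => Δ.stepP σ π w c c' * h c') := by
  refine Summable.of_nonneg_of_le
    (fun c' => mul_nonneg (stepP_nonneg Δ σ π w c c') (h0 c'))
    (fun c' => ?_) (stepP_summable Δ σ π w c)
  have := mul_le_mul_of_nonneg_left (h1 c') (stepP_nonneg Δ σ π w c c')
  simpa using this

lemma step_mul_tsum_le_one (w : List (List Γ)) (c : List Γ) {h : List Γ → ℝ}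
    (h0 : ∀ c', 0 ≤ h c') (h1 : ∀ c', h c' ≤ 1) :
    ∑' c', Δ.stepP σ π w c c' * h c' ≤ 1 := by
  calc ∑' c', Δ.stepP σ π w c c' * h c' ≤ ∑' c', Δ.stepP σ π w c c' := by
        refine Summable.tsum_le_tsum (fun c' => ?_) (step_mul_summable Δ σ π w c h0 h1)
          (stepP_summable Δ σ π w c)
        have := mul_le_mul_of_nonneg_left (h1 c') (stepP_nonneg Δ σ π w c c')
        simpa using this
    _ = 1 := stepP_tsum_one Δ σ π w c

end BPA
namespace BPA

variable {Γ : Type*} [Fintype Γ] (Δ : BPA Γ) (σ : Δ.Strat Δ.isBox) (π : Δ.Strat Δ.isDiamond)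
  (T : Set (List Γ))

lemma reachN_zero (w : List (List Γ)) (c : List Γ) :
    Δ.reachN σ π T 0 w c = if c ∈ T then 1 else 0 := rfl

lemma reachN_succ (n : ℕ) (w : List (List Γ)) (c : List Γ) :
    Δ.reachN σ π T (n+1) w c = if c ∈ T then 1 else
      ∑' c', Δ.stepP σ π w c c' * Δ.reachN σ π T n (w ++ [c]) c' := rfl

lemma reachN_of_mem {c : List Γ} (h : c ∈ T) (n : ℕ) (w : List (List Γ)) :
    Δ.reachN σ π T n w c = 1 := by
  cases n with
  | zero => rw [reachN_zero, if_pos h]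
  | succ n => rw [reachN_succ, if_pos h]

lemma reachN_zero_of_not_mem {c : List Γ} (h : c ∉ T) (w : List (List Γ)) :
    Δ.reachN σ π T 0 w c = 0 := by
  rw [reachN_zero, if_neg h]

lemma reachN_succ_of_not_mem {c : List Γ} (h : c ∉ T) (n : ℕ) (w : List (List Γ)) :
    Δ.reachN σ π T (n+1) w c
      = ∑' c', Δ.stepP σ π w c c' * Δ.reachN σ π T n (w ++ [c]) c' := by
  rw [reachN_succ, if_neg h]

lemma reachN_nonneg : ∀ (n : ℕ) (w : List (List Γ)) (c : List Γ), 0 ≤ Δ.reachN σ π T n w c := by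
  intro n
  induction n with
  | zero => intro w c; rw [reachN_zero]; split <;> norm_num
  | succ n ih =>
    intro w c
    rw [reachN_succ]
    split
    · norm_num
    · exact tsum_nonneg fun c' => mul_nonneg (stepP_nonneg Δ σ π w c c') (ih _ _)

lemma reachN_le_one : ∀ (n : ℕ) (w : List (List Γ)) (c : List Γ), Δ.reachN σ π T n w c ≤ 1 := by
  intro n
  induction n with
  | zero => intro w c; rw [reachN_zero]; split <;> norm_num
  | succ n ih =>
    intro w c
    rw [reachN_succ]
    split
    · norm_num
    · exact step_mul_tsum_le_one Δ σ π w c (fun c' => reachN_nonneg Δ σ π T n _ c') (fun c' => ih _ c')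

lemma reachN_summable (n : ℕ) (w v : List (List Γ)) (c : List Γ) :
    Summable (fun c' => Δ.stepP σ π w c c' * Δ.reachN σ π T n v c') :=
  step_mul_summable Δ σ π w c (fun c' => reachN_nonneg Δ σ π T n v c')
    (fun c' => reachN_le_one Δ σ π T n v c')

lemma reachN_mono_fuel : ∀ (m n : ℕ), m ≤ n → ∀ (w : List (List Γ)) (c : List Γ),
    Δ.reachN σ π T m w c ≤ Δ.reachN σ π T n w c := by
  have key : ∀ (n : ℕ) (w : List (List Γ)) (c : List Γ),
      Δ.reachN σ π T n w c ≤ Δ.reachN σ π T (n+1) w c := by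
    intro n
    induction n with
    | zero =>
      intro w c
      rw [reachN_zero, reachN_succ]
      split
      · norm_num
      · exact tsum_nonneg fun c' => mul_nonneg (stepP_nonneg Δ σ π w c c')
          (reachN_nonneg Δ σ π T 0 _ c')
    | succ n ih =>
      intro w c
      rw [reachN_succ, reachN_succ]
      split
      · exact le_refl _
      · exact Summable.tsum_le_tsum
          (fun c' => mul_le_mul_of_nonneg_left (ih _ c') (stepP_nonneg Δ σ π w c c'))
          (reachN_summable Δ σ π T n w _ c) (reachN_summable Δ σ π T (n+1) w _ c)
  intro m n hmn w c
  induction n with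
  | zero => rw [Nat.le_zero.mp hmn]
  | succ n ih =>
    rcases Nat.lt_or_ge m (n+1) with h | h
    · exact le_trans (ih (Nat.lt_succ_iff.mp h)) (key n w c)
    · rw [Nat.le_antisymm hmn h]

lemma reachN_mono_T {T' : Set (List Γ)} (hT : T ⊆ T') :
    ∀ (n : ℕ) (w : List (List Γ)) (c : List Γ),
    Δ.reachN σ π T n w c ≤ Δ.reachN σ π T' n w c := by
  intro n
  induction n with
  | zero =>
    intro w c
    rw [reachN_zero, reachN_zero]
    split
    · rename_i h; rw [if_pos (hT h)]
    · split <;> norm_num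
  | succ n ih =>
    intro w c
    rw [reachN_succ, reachN_succ]
    by_cases h : c ∈ T
    · rw [if_pos h, if_pos (hT h)]
    · rw [if_neg h]
      split
      · exact step_mul_tsum_le_one Δ σ π w c (fun c' => reachN_nonneg Δ σ π T n _ c')
          (fun c' => reachN_le_one Δ σ π T n _ c')
      · exact Summable.tsum_le_tsum
          (fun c' => mul_le_mul_of_nonneg_left (ih _ c') (stepP_nonneg Δ σ π w c c'))
          (reachN_summable Δ σ π T n w _ c) (reachN_summable Δ σ π T' n w _ c)

lemma reachN_nil (hT : ([] : List Γ) ∉ T) :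
    ∀ (n : ℕ) (w : List (List Γ)), Δ.reachN σ π T n w [] = 0 := by
  intro n
  induction n with
  | zero => intro w; rw [reachN_zero, if_neg hT]
  | succ n ih =>
    intro w
    rw [reachN_succ, if_neg hT]
    rw [tsum_eq_single ([] : List Γ) (fun c' hne => by
      rw [stepP_nil, if_neg hne, zero_mul])]
    rw [ih]
    ring

lemma reachP_nonneg (c : List Γ) : 0 ≤ Δ.reachP σ π T c :=
  le_trans (reachN_nonneg Δ σ π T 0 [] c) (le_ciSup (bddAbove_of_le_one
    (fun n => reachN_le_one Δ σ π T n [] c)) 0)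

lemma reachP_le_one (c : List Γ) : Δ.reachP σ π T c ≤ 1 :=
  ciSup_le fun n => reachN_le_one Δ σ π T n [] c

lemma reachN_le_reachP (n : ℕ) (c : List Γ) : Δ.reachN σ π T n [] c ≤ Δ.reachP σ π T c :=
  le_ciSup (bddAbove_of_le_one (fun m => reachN_le_one Δ σ π T m [] c)) n

lemma reachP_mono_T {T' : Set (List Γ)} (hT : T ⊆ T') (c : List Γ) :
    Δ.reachP σ π T c ≤ Δ.reachP σ π T' c :=
  ciSup_le fun n => le_trans (reachN_mono_T Δ σ π T hT n [] c) (reachN_le_reachP Δ σ π T' n c)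

lemma not_mem_WDiaLtOne {c : List Γ} :
    c ∉ Δ.WDiaLtOne T ↔ ∀ π : Δ.Strat Δ.isDiamond, ∃ σ : Δ.Strat Δ.isBox,
      Δ.reachP σ π T c = 1 := by
  unfold WDiaLtOne
  simp only [Set.mem_setOf_eq, not_exists, not_forall, not_lt]
  constructor
  · intro h π
    obtain ⟨σ, hσ⟩ := h π
    exact ⟨σ, le_antisymm (reachP_le_one Δ σ π T c) hσ⟩
  · intro h π
    obtain ⟨σ, hσ⟩ := h π
    exact ⟨σ, hσ.ge⟩

end BPA
namespace BPA

variable {Γ : Type*} [Fintype Γ] (Δ : BPA Γ)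

/-- Append a fixed suffix to every configuration in a history. -/
def lift (β : List Γ) (w : List (List Γ)) : List (List Γ) := w.map (· ++ β)

/-- Remove a fixed-length suffix from a configuration. -/
def strip (β : List Γ) (c : List Γ) : List Γ := c.take (c.length - β.length)

omit [Fintype Γ] in
lemma strip_append (β γ : List Γ) : strip β (γ ++ β) = γ := by
  unfold strip
  rw [List.length_append, Nat.add_sub_cancel]
  exact List.take_left

omit [Fintype Γ] in
lemma stripH_lift (β : List Γ) (w : List (List Γ)) :
    (lift β w).map (strip β) = w := by
  unfold lift
  rw [List.map_map]
  have : (strip β ∘ (· ++ β)) = id := by funext γ; exact strip_append β γ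
  rw [this, List.map_id]

omit [Fintype Γ] in
lemma long_append {β γ : List Γ} (h : γ ≠ []) : β.length < (γ ++ β).length := by
  rw [List.length_append]
  have : 0 < γ.length := List.length_pos_iff.mpr h
  omega

omit [Fintype Γ] in
lemma lift_append (β : List Γ) (w : List (List Γ)) (γ : List Γ) :
    lift β (w ++ [γ]) = lift β w ++ [γ ++ β] := by
  simp [lift]

omit [Fintype Γ] in
lemma topLang_cons {ΓT : Set Γ} (X : Γ) (t : List Γ) :
    (X :: t) ∈ topLang ΓT ↔ X ∈ ΓT := by
  constructor
  · rintro ⟨Y, β', h, hY⟩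
    cases h
    exact hY
  · intro h
    exact ⟨X, t, rfl, h⟩

omit [Fintype Γ] in
lemma topLang_nil {ΓT : Set Γ} : ([] : List Γ) ∉ topLang ΓT := by
  rintro ⟨Y, β', h, -⟩
  cases h

omit [Fintype Γ] in
lemma topLang_append {ΓT : Set Γ} {γ : List Γ} (h : γ ≠ []) (β : List Γ) :
    γ ++ β ∈ topLang ΓT ↔ γ ∈ topLang ΓT := by
  cases γ with
  | nil => exact absurd rfl h
  | cons X t => rw [List.cons_append, topLang_cons, topLang_cons]

variable (σ1 σ2 : Δ.Strat Δ.isBox) (π1 π2 : Δ.Strat Δ.isDiamond)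

lemma choice_congr {w1 w2 : List (List Γ)} {X : Γ} {t1 t2 : List Γ}
    (hσ : ∀ α, σ1.f w1 (X :: t1) α = σ2.f w2 (X :: t2) α)
    (hπ : ∀ α, π1.f w1 (X :: t1) α = π2.f w2 (X :: t2) α) (α : List Γ) :
    Δ.choice σ1 π1 w1 (X :: t1) α = Δ.choice σ2 π2 w2 (X :: t2) α := by
  rw [choice_cons, choice_cons]
  split
  · exact hσ α
  · split
    · exact hπ α
    · rfl

lemma stepP_congr {w1 w2 : List (List Γ)} {c : List Γ}
    (h : ∀ α, Δ.choice σ1 π1 w1 c α = Δ.choice σ2 π2 w2 c α) (c' : List Γ) :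
    Δ.stepP σ1 π1 w1 c c' = Δ.stepP σ2 π2 w2 c c' := by
  cases c with
  | nil => rw [stepP_nil, stepP_nil]
  | cons X t =>
    rw [stepP_cons, stepP_cons]
    refine tsum_congr fun α => ?_
    rw [h α]

/-- Reindexing a one-step sum from a configuration with a fixed suffix `β`. -/
lemma step_reindex {β : List Γ} {w : List (List Γ)} {γ : List Γ} (hγ : γ ≠ [])
    (hchoice : ∀ α, Δ.choice σ1 π1 (lift β w) (γ ++ β) α = Δ.choice σ2 π2 w γ α)
    (G : List Γ → ℝ) :
    ∑' c', Δ.stepP σ1 π1 (lift β w) (γ ++ β) c' * G c'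
      = ∑' γ', Δ.stepP σ2 π2 w γ γ' * G (γ' ++ β) := by
  cases γ with
  | nil => exact absurd rfl hγ
  | cons Z t =>
    have hstep : ∀ γ' : List Γ,
        Δ.stepP σ1 π1 (lift β w) ((Z :: t) ++ β) (γ' ++ β) = Δ.stepP σ2 π2 w (Z :: t) γ' := by
      intro γ'
      rw [List.cons_append, stepP_cons, stepP_cons]
      refine tsum_congr fun α => ?_
      have hiff : (α ++ (t ++ β) = γ' ++ β ∧ Δ.rule Z α) ↔ (α ++ t = γ' ∧ Δ.rule Z α) := by
        constructor
        · rintro ⟨h1, h2⟩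
          refine ⟨List.append_cancel_right (by rw [← List.append_assoc] at h1; exact h1), h2⟩
        · rintro ⟨h1, h2⟩
          refine ⟨by rw [← List.append_assoc, h1], h2⟩
      rw [if_congr hiff rfl rfl]
      split
      · exact hchoice α
      · rfl
    have hsupp : ∀ c', (¬ ∃ γ', γ' ++ β = c') →
        Δ.stepP σ1 π1 (lift β w) ((Z :: t) ++ β) c' = 0 := by
      intro c' hc'
      rw [List.cons_append]
      refine stepP_cons_eq_zero Δ σ1 π1 _ Z (t ++ β) c' fun α₀ he => hc' ⟨α₀ ++ t, ?_⟩
      rw [List.append_assoc]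
      exact he
    rw [← Function.Injective.tsum_eq (append_injective (Γ := Γ) β)
      (f := fun c' => Δ.stepP σ1 π1 (lift β w) ((Z :: t) ++ β) c' * G c')]
    · refine tsum_congr fun γ' => ?_
      rw [hstep γ']
    · intro c' hc'
      rcases Function.mem_support.mp hc' with h
      by_contra hr
      have h0 : Δ.stepP σ1 π1 (lift β w) ((Z :: t) ++ β) c' = 0 :=
        hsupp c' (fun ⟨γ', hg⟩ => hr ⟨γ', hg⟩)
      rw [h0, zero_mul] at h
      exact h rfl

/-- History-shift: if both strategy pairs agree (modulo a history prefix `p`)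
on all histories arising from a play started at `c₀`, the finite-horizon
reachability values coincide. -/
lemma reachN_shift (T : Set (List Γ)) (p : List (List Γ)) (c₀ : List Γ)
    (hch : ∀ (u : List (List Γ)) (c : List Γ),
      ((u = [] ∧ c = c₀) ∨ (∃ rest, u = c₀ :: rest)) →
      ∀ α, Δ.choice σ1 π1 (p ++ u) c α = Δ.choice σ2 π2 u c α) :
    ∀ (n : ℕ) (u : List (List Γ)) (c : List Γ),
      ((u = [] ∧ c = c₀) ∨ (∃ rest, u = c₀ :: rest)) →
      Δ.reachN σ1 π1 T n (p ++ u) c = Δ.reachN σ2 π2 T n u c := by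
  intro n
  induction n with
  | zero => intro u c _; rw [reachN_zero, reachN_zero]
  | succ n ih =>
    intro u c hu
    rw [reachN_succ, reachN_succ]
    split
    · rfl
    · have hinv : ((u ++ [c] : List (List Γ)) = [] ∧ ([] : List Γ) = c₀)
          ∨ (∃ rest, u ++ [c] = c₀ :: rest) := by
        rcases hu with ⟨h1, h2⟩ | ⟨rest, h1⟩
        · right; exact ⟨[], by rw [h1, h2]; rfl⟩
        · right; exact ⟨rest ++ [c], by rw [h1]; rfl⟩
      refine tsum_congr fun c' => ?_
      rw [stepP_congr Δ σ1 σ2 π1 π2 (hch u c hu) c']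
      have : p ++ u ++ [c] = p ++ (u ++ [c]) := by rw [List.append_assoc]
      rw [this]
      have hinv' : ((u ++ [c] : List (List Γ)) = [] ∧ c' = c₀)
          ∨ (∃ rest, u ++ [c] = c₀ :: rest) := by
        rcases hinv with ⟨h1, -⟩ | h1
        · exact absurd h1 (by simp)
        · right; exact h1
      rw [ih (u ++ [c]) c' hinv']

end BPA
namespace BPA

variable {Γ : Type*} [Fintype Γ] {Δ : BPA Γ}

omit [Fintype Γ] in
lemma strip_cons (β : List Γ) (X : Γ) (t : List Γ) (h : β.length ≤ t.length) :
    strip β (X :: t) = X :: t.take (t.length - β.length) := by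
  unfold strip
  rw [List.length_cons, Nat.succ_sub h, List.take_succ_cons]

/-- Lift a strategy on stripped configurations to configurations with suffix `β`. -/
noncomputable def Strat.liftStrat {own : Γ → Prop} (s : Δ.Strat own) (β : List Γ) :
    Δ.Strat own where
  f := fun v c α => if β.length < c.length then s.f (v.map (strip β)) (strip β c) α
      else (Δ.defaultStrat own).f v c α
  nonneg := by
    intro w c α
    split
    · exact s.nonneg _ _ _
    · exact (Δ.defaultStrat own).nonneg _ _ _
  supp := by
    intro w X t α hown hne
    split at hne
    · rename_i h
      rw [List.length_cons] at h
      have h' : β.length ≤ t.length := Nat.lt_succ_iff.mp h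
      rw [strip_cons β X t h'] at hne
      exact s.supp _ _ _ _ hown hne
    · exact (Δ.defaultStrat own).supp _ _ _ _ hown hne
  sum_one := by
    intro w X t hown
    split
    · rename_i h
      rw [List.length_cons] at h
      have h' : β.length ≤ t.length := Nat.lt_succ_iff.mp h
      rw [strip_cons β X t h']
      exact s.sum_one _ _ _ hown
    · exact (Δ.defaultStrat own).sum_one _ _ _ hown

/-- Shift a strategy by a fixed history prefix. -/
def Strat.shift {own : Γ → Prop} (s : Δ.Strat own) (p : List (List Γ)) : Δ.Strat own where
  f := fun u c α => s.f (p ++ u) c α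
  nonneg := fun u c α => s.nonneg _ _ _
  supp := fun u X t α h hne => s.supp _ _ _ _ h hne
  sum_one := fun u X t h => s.sum_one _ _ _ h

/-- The predicate `c` is longer than `β`, as a `Bool`. -/
def longB (β : List Γ) (c : List Γ) : Bool := decide (β.length < c.length)

/-- Composition of a phase-1 strategy (played on top of the stack suffix `β`)
with a phase-2 strategy (played after the suffix has been exposed). -/
noncomputable def Strat.comp {own : Γ → Prop} (s1 : Δ.Strat own)
    (s2 : List (List Γ) → Δ.Strat own) (β : List Γ) : Δ.Strat own where
  f := fun v c α =>
    if (∀ x ∈ v, β.length < x.length) ∧ β.length < c.length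
    then s1.f (v.map (strip β)) (strip β c) α
    else (s2 (v.takeWhile (longB β))).f (v.dropWhile (longB β)) c α
  nonneg := by
    intro w c α
    split
    · exact s1.nonneg _ _ _
    · exact (s2 _).nonneg _ _ _
  supp := by
    intro w X t α hown hne
    split at hne
    · rename_i h
      have h' : β.length ≤ t.length := Nat.lt_succ_iff.mp (by
        have := h.2; rwa [List.length_cons] at this)
      rw [strip_cons β X t h'] at hne
      exact s1.supp _ _ _ _ hown hne
    · exact (s2 _).supp _ _ _ _ hown hne
  sum_one := by
    intro w X t hown
    split
    · rename_i h
      have h' : β.length ≤ t.length := Nat.lt_succ_iff.mp (by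
        have := h.2; rwa [List.length_cons] at this)
      rw [strip_cons β X t h']
      exact s1.sum_one _ _ _ hown
    · exact (s2 _).sum_one _ _ _ hown

lemma comp_f_phase1 {own : Γ → Prop} (s1 : Δ.Strat own) (s2 : List (List Γ) → Δ.Strat own)
    (β : List Γ) (w : List (List Γ)) (γ : List Γ)
    (hw : ∀ x ∈ w, x ≠ ([] : List Γ)) (hγ : γ ≠ []) (α : List Γ) :
    (s1.comp s2 β).f (lift β w) (γ ++ β) α = s1.f w γ α := by
  unfold Strat.comp
  dsimp only
  rw [if_pos]
  · rw [stripH_lift, strip_append]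
  · constructor
    · intro x hx
      rcases List.mem_map.mp hx with ⟨y, hy, rfl⟩
      exact long_append (hw y hy)
    · exact long_append hγ

omit [Fintype Γ] in
lemma dropWhile_lift_nil (β : List Γ) (w : List (List Γ)) (hw : ∀ x ∈ w, x ≠ ([] : List Γ)) :
    (lift β w).dropWhile (longB β) = [] := by
  rw [List.dropWhile_eq_nil_iff]
  intro x hx
  rcases List.mem_map.mp hx with ⟨y, hy, rfl⟩
  exact decide_eq_true (long_append (hw y hy))

omit [Fintype Γ] in
lemma takeWhile_lift_all (β : List Γ) (w : List (List Γ)) (hw : ∀ x ∈ w, x ≠ ([] : List Γ)) :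
    (lift β w).takeWhile (longB β) = lift β w := by
  rw [List.takeWhile_eq_self_iff]
  intro x hx
  rcases List.mem_map.mp hx with ⟨y, hy, rfl⟩
  exact decide_eq_true (long_append (hw y hy))

omit [Fintype Γ] in
lemma dropWhile_lift_append (β : List Γ) (w : List (List Γ)) (hw : ∀ x ∈ w, x ≠ ([] : List Γ))
    (rest : List (List Γ)) :
    (lift β w ++ (β :: rest)).dropWhile (longB β) = β :: rest := by
  rw [List.dropWhile_append]
  rw [dropWhile_lift_nil β w hw]
  simp only [List.isEmpty_nil, if_true]
  rw [List.dropWhile_cons]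
  have : longB β β = false := by
    simp [longB]
  rw [this]
  simp

omit [Fintype Γ] in
lemma takeWhile_lift_append (β : List Γ) (w : List (List Γ)) (hw : ∀ x ∈ w, x ≠ ([] : List Γ))
    (rest : List (List Γ)) :
    (lift β w ++ (β :: rest)).takeWhile (longB β) = lift β w := by
  rw [List.takeWhile_append]
  split
  · rename_i h
    rw [List.takeWhile_cons]
    have hb : longB β β = false := by simp [longB]
    rw [hb]
    simp
  · rename_i h
    exact absurd (congrArg List.length (takeWhile_lift_all β w hw)) h

lemma comp_f_phase2 {own : Γ → Prop} (s1 : Δ.Strat own) (s2 : List (List Γ) → Δ.Strat own)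
    (β : List Γ) (w : List (List Γ)) (hw : ∀ x ∈ w, x ≠ ([] : List Γ))
    (u : List (List Γ)) (c : List Γ)
    (hu : (u = [] ∧ c = β) ∨ (∃ rest, u = β :: rest)) (α : List Γ) :
    (s1.comp s2 β).f (lift β w ++ u) c α = (s2 (lift β w)).f u c α := by
  unfold Strat.comp
  dsimp only
  rcases hu with ⟨rfl, hc⟩ | ⟨rest, rfl⟩
  · rw [if_neg]
    · rw [List.append_nil, takeWhile_lift_all β w hw, dropWhile_lift_nil β w hw]
    · rintro ⟨-, h2⟩
      rw [hc] at h2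
      omega
  · rw [if_neg]
    · rw [takeWhile_lift_append β w hw, dropWhile_lift_append β w hw]
    · rintro ⟨h1, -⟩
      have : β ∈ lift β w ++ (β :: rest) := by simp
      have := h1 β this
      omega

end BPA
namespace BPA

variable {Γ : Type*} [Fintype Γ] {Δ : BPA Γ}

/-- The simple target extended with the empty configuration. -/
def topSetE (S : Set Γ) : Set (List Γ) := Set.union (topLang S) {([] : List Γ)}

omit [Fintype Γ] in
lemma mem_topSetE {S : Set Γ} {c : List Γ} :
    c ∈ topSetE S ↔ c ∈ topLang S ∨ c = [] := Iff.rfl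

/-- Restrict a strategy to the top part of the stack above a fixed suffix `β`. -/
def Strat.pushdown {own : Γ → Prop} (s : Δ.Strat own) (β : List Γ) : Δ.Strat own where
  f := fun w c α => s.f (lift β w) (c ++ β) α
  nonneg := fun w c α => s.nonneg _ _ _
  supp := fun w X t α h hne => s.supp (lift β w) X (t ++ β) α h hne
  sum_one := fun w X t h => s.sum_one (lift β w) X (t ++ β) h

/-- `ε` is winning for Diamond. -/
lemma nil_mem_WDiaLtOne {T : Set (List Γ)} (hT : ([] : List Γ) ∉ T) :
    ([] : List Γ) ∈ Δ.WDiaLtOne T := by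
  refine ⟨Δ.defaultStrat Δ.isDiamond, fun σ => ?_⟩
  have h1 : ∀ n : ℕ, Δ.reachN σ (Δ.defaultStrat Δ.isDiamond) T n [] [] = 0 :=
    fun n => reachN_nil Δ σ _ T hT n []
  have h0 : Δ.reachP σ (Δ.defaultStrat Δ.isDiamond) T [] = 0 := by
    unfold BPA.reachP
    simp only [h1]
    rw [ciSup_const]
  rw [h0]
  norm_num

section Lift

variable (ΓT : Set Γ) (β : List Γ) (σB : Δ.Strat Δ.isBox) (πB : Δ.Strat Δ.isDiamond)
  (σS : Δ.Strat Δ.isBox) (πS : Δ.Strat Δ.isDiamond)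

/-- Phase-1 comparison: the lifted play reaches `T` at most as often as the
stripped play reaches `T ∪ {ε}`. -/
lemma reachN_lift_le
    (hch : ∀ (w : List (List Γ)) (γ : List Γ), (∀ x ∈ w, x ≠ ([] : List Γ)) → γ ≠ [] →
      ∀ α, Δ.choice σB πB (lift β w) (γ ++ β) α = Δ.choice σS πS w γ α) :
    ∀ (n : ℕ) (w : List (List Γ)) (γ : List Γ), (∀ x ∈ w, x ≠ ([] : List Γ)) →
      Δ.reachN σB πB (topLang ΓT) n (lift β w) (γ ++ β)
        ≤ Δ.reachN σS πS (topSetE ΓT) n w γ := by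
  have hnil : ([] : List Γ) ∈ topSetE ΓT :=
    mem_topSetE.mpr (Or.inr rfl)
  intro n
  induction n with
  | zero =>
    intro w γ hw
    by_cases hγ : γ = []
    · subst hγ
      rw [reachN_of_mem Δ σS πS _ hnil]
      exact reachN_le_one Δ σB πB _ _ _ _
    · by_cases hmem : γ ∈ topLang ΓT
      · rw [reachN_of_mem Δ σS πS _ (mem_topSetE.mpr (Or.inl hmem))]
        exact reachN_le_one Δ σB πB _ _ _ _
      · rw [reachN_zero_of_not_mem Δ σB πB _ (fun h => hmem ((topLang_append hγ β).mp h))]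
        exact reachN_nonneg Δ σS πS _ _ _ _
  | succ n ih =>
    intro w γ hw
    by_cases hγ : γ = []
    · subst hγ
      rw [reachN_of_mem Δ σS πS _ hnil]
      exact reachN_le_one Δ σB πB _ _ _ _
    · by_cases hmem : γ ∈ topLang ΓT
      · rw [reachN_of_mem Δ σS πS _ (mem_topSetE.mpr (Or.inl hmem))]
        exact reachN_le_one Δ σB πB _ _ _ _
      · have hmem' : γ ++ β ∉ topLang ΓT := fun h => hmem ((topLang_append hγ β).mp h)
        have hmem'' : γ ∉ topSetE ΓT := by
          rw [mem_topSetE]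
          rintro (h | h)
          · exact hmem h
          · exact hγ h
        rw [reachN_succ_of_not_mem Δ σB πB _ hmem', reachN_succ_of_not_mem Δ σS πS _ hmem'']
        rw [step_reindex Δ σB σS πB πS hγ (hch w γ hw hγ)]
        have hw' : ∀ x ∈ w ++ [γ], x ≠ ([] : List Γ) := by
          intro x hx
          rcases List.mem_append.mp hx with h | h
          · exact hw x h
          · rw [List.mem_singleton.mp h]; exact hγ
        refine Summable.tsum_le_tsum (fun γ' => ?_) ?_ ?_
        · have := ih (w ++ [γ]) γ' hw'
          rw [lift_append] at this
          exact mul_le_mul_of_nonneg_left this (stepP_nonneg Δ σS πS w γ γ')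
        · exact step_mul_summable Δ σS πS w γ
            (fun γ' => reachN_nonneg Δ σB πB _ n _ _)
            (fun γ' => reachN_le_one Δ σB πB _ n _ _)
        · exact reachN_summable Δ σS πS _ n w _ γ

/-- Phase-1 comparison, reverse direction, for the plain target `T`. -/
lemma reachN_lift_ge
    (hch : ∀ (w : List (List Γ)) (γ : List Γ), (∀ x ∈ w, x ≠ ([] : List Γ)) → γ ≠ [] →
      ∀ α, Δ.choice σB πB (lift β w) (γ ++ β) α = Δ.choice σS πS w γ α) :
    ∀ (n : ℕ) (w : List (List Γ)) (γ : List Γ), (∀ x ∈ w, x ≠ ([] : List Γ)) →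
      Δ.reachN σS πS (topLang ΓT) n w γ
        ≤ Δ.reachN σB πB (topLang ΓT) n (lift β w) (γ ++ β) := by
  intro n
  induction n with
  | zero =>
    intro w γ hw
    by_cases hγ : γ = []
    · subst hγ
      rw [reachN_zero_of_not_mem Δ σS πS _ topLang_nil]
      exact reachN_nonneg Δ σB πB _ _ _ _
    · by_cases hmem : γ ∈ topLang ΓT
      · rw [reachN_of_mem Δ σB πB _ ((topLang_append hγ β).mpr hmem)]
        exact reachN_le_one Δ σS πS _ _ _ _
      · rw [reachN_zero_of_not_mem Δ σS πS _ hmem]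
        exact reachN_nonneg Δ σB πB _ _ _ _
  | succ n ih =>
    intro w γ hw
    by_cases hγ : γ = []
    · subst hγ
      rw [reachN_nil Δ σS πS _ topLang_nil]
      exact reachN_nonneg Δ σB πB _ _ _ _
    · by_cases hmem : γ ∈ topLang ΓT
      · rw [reachN_of_mem Δ σB πB _ ((topLang_append hγ β).mpr hmem)]
        exact reachN_le_one Δ σS πS _ _ _ _
      · have hmem' : γ ++ β ∉ topLang ΓT := fun h => hmem ((topLang_append hγ β).mp h)
        rw [reachN_succ_of_not_mem Δ σB πB _ hmem', reachN_succ_of_not_mem Δ σS πS _ hmem]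
        rw [step_reindex Δ σB σS πB πS hγ (hch w γ hw hγ)]
        have hw' : ∀ x ∈ w ++ [γ], x ≠ ([] : List Γ) := by
          intro x hx
          rcases List.mem_append.mp hx with h | h
          · exact hw x h
          · rw [List.mem_singleton.mp h]; exact hγ
        refine Summable.tsum_le_tsum (fun γ' => ?_) ?_ ?_
        · have := ih (w ++ [γ]) γ' hw'
          rw [lift_append] at this
          exact mul_le_mul_of_nonneg_left this (stepP_nonneg Δ σS πS w γ γ')
        · exact reachN_summable Δ σS πS _ n w _ γ
        · exact step_mul_summable Δ σS πS w γ
            (fun γ' => reachN_nonneg Δ σB πB _ n _ _)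
            (fun γ' => reachN_le_one Δ σB πB _ n _ _)

end Lift

/-- Case (ii): a symbol in `A` on top makes any configuration winning. -/
lemma mem_W_cons_of_A {ΓT : Set Γ} {X : Γ}
    (hX : [X] ∈ Δ.WDiaLtOne (topSetE ΓT)) (β : List Γ) :
    X :: β ∈ Δ.WDiaLtOne (topLang ΓT) := by
  obtain ⟨πS, hπS⟩ := hX
  refine ⟨πS.liftStrat β, fun σB => ?_⟩
  set σS := σB.pushdown β with hσS
  have hch : ∀ (w : List (List Γ)) (γ : List Γ), (∀ x ∈ w, x ≠ ([] : List Γ)) → γ ≠ [] →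
      ∀ α, Δ.choice σB (πS.liftStrat β) (lift β w) (γ ++ β) α = Δ.choice σS πS w γ α := by
    intro w γ hw hγ
    cases γ with
    | nil => exact absurd rfl hγ
    | cons Z t =>
      refine choice_congr Δ σB σS (πS.liftStrat β) πS (fun α => rfl) (fun α => ?_)
      show (πS.liftStrat β).f (lift β w) ((Z :: t) ++ β) α = πS.f w (Z :: t) α
      unfold Strat.liftStrat
      dsimp only
      rw [if_pos (long_append (List.cons_ne_nil Z t))]
      rw [stripH_lift, strip_append]
  have key : ∀ n : ℕ, Δ.reachN σB (πS.liftStrat β) (topLang ΓT) n [] (X :: β)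
      ≤ Δ.reachP σS πS (topSetE ΓT) [X] := by
    intro n
    have h1 := reachN_lift_le ΓT β σB (πS.liftStrat β) σS πS hch n [] [X] (by simp)
    have h2 : lift β ([] : List (List Γ)) = [] := rfl
    rw [h2] at h1
    exact le_trans h1 (reachN_le_reachP Δ σS πS _ n [X])
  calc Δ.reachP σB (πS.liftStrat β) (topLang ΓT) (X :: β)
      ≤ Δ.reachP σS πS (topSetE ΓT) [X] := ciSup_le key
    _ < 1 := hπS σS

/-- Case (H1): a symbol not in `C` on top makes any configuration losing. -/
lemma not_mem_W_cons_of_not_C {ΓT : Set Γ} {X : Γ}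
    (hX : [X] ∉ Δ.WDiaLtOne (topLang ΓT)) (β : List Γ) :
    X :: β ∉ Δ.WDiaLtOne (topLang ΓT) := by
  rw [not_mem_WDiaLtOne (Δ := Δ) (T := topLang ΓT)] at hX ⊢
  intro πB
  obtain ⟨σS, hσS⟩ := hX (πB.pushdown β)
  refine ⟨σS.liftStrat β, ?_⟩
  set πS := πB.pushdown β with hπS
  have hch : ∀ (w : List (List Γ)) (γ : List Γ), (∀ x ∈ w, x ≠ ([] : List Γ)) → γ ≠ [] →
      ∀ α, Δ.choice (σS.liftStrat β) πB (lift β w) (γ ++ β) α = Δ.choice σS πS w γ α := by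
    intro w γ hw hγ
    cases γ with
    | nil => exact absurd rfl hγ
    | cons Z t =>
      refine choice_congr Δ (σS.liftStrat β) σS πB πS (fun α => ?_) (fun α => rfl)
      show (σS.liftStrat β).f (lift β w) ((Z :: t) ++ β) α = σS.f w (Z :: t) α
      unfold Strat.liftStrat
      dsimp only
      rw [if_pos (long_append (List.cons_ne_nil Z t))]
      rw [stripH_lift, strip_append]
  have key : ∀ n : ℕ, Δ.reachN σS πS (topLang ΓT) n [] [X]
      ≤ Δ.reachP (σS.liftStrat β) πB (topLang ΓT) (X :: β) := by
    intro n
    have h1 := reachN_lift_ge ΓT β (σS.liftStrat β) πB σS πS hch n [] [X] (by simp)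
    have h2 : lift β ([] : List (List Γ)) = [] := rfl
    rw [h2] at h1
    exact le_trans h1 (reachN_le_reachP Δ _ πB _ n (X :: β))
  have h1le : (1 : ℝ) ≤ Δ.reachP (σS.liftStrat β) πB (topLang ΓT) (X :: β) := by
    rw [← hσS]
    exact ciSup_le key
  exact le_antisymm (reachP_le_one Δ _ πB _ _) h1le

end BPA
namespace BPA

variable {Γ : Type*} [Fintype Γ]

/-- Finite-horizon reach value with terminal payoff `g m` at the empty
configuration. -/
noncomputable def hitQ (Δ : BPA Γ) (σ : Δ.Strat Δ.isBox) (π : Δ.Strat Δ.isDiamond)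
    (T : Set (List Γ)) (g : ℕ → List (List Γ) → ℝ) (m : ℕ) :
    ℕ → List (List Γ) → List Γ → ℝ
  | 0, w, γ => if γ = [] then g m w else if γ ∈ T then 1 else 0
  | n+1, w, γ => if γ = [] then g m w else if γ ∈ T then 1 else
      ∑' γ', Δ.stepP σ π w γ γ' * hitQ Δ σ π T g m n (w ++ [γ]) γ'

/-- Probability of following a pop path `v` and then popping, avoiding `T`. -/
noncomputable def popP (Δ : BPA Γ) (σ : Δ.Strat Δ.isBox) (π : Δ.Strat Δ.isDiamond)
    (T : Set (List Γ)) : List (List Γ) → List Γ → List (List Γ) → ℝ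
  | w, γ, [] => if γ ∈ T ∨ γ = [] then 0 else Δ.stepP σ π w γ []
  | w, γ, γ' :: v => if γ ∈ T ∨ γ = [] then 0 else
      Δ.stepP σ π w γ γ' * popP Δ σ π T (w ++ [γ]) γ' v

/-- Finite-horizon pop value: expected payoff `r` collected when the play pops
to the empty configuration while avoiding `T`. -/
noncomputable def popV (Δ : BPA Γ) (σ : Δ.Strat Δ.isBox) (π : Δ.Strat Δ.isDiamond)
    (T : Set (List Γ)) (r : List (List Γ) → ℝ) : ℕ → List (List Γ) → List Γ → ℝ
  | 0, _, _ => 0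
  | m+1, w, γ => if γ ∈ T ∨ γ = [] then 0 else
      Δ.stepP σ π w γ [] * r (w ++ [γ]) +
        ∑' γ', Δ.stepP σ π w γ γ' * popV Δ σ π T r m (w ++ [γ]) γ'

variable {Δ : BPA Γ} (σ : Δ.Strat Δ.isBox) (π : Δ.Strat Δ.isDiamond)
  (T : Set (List Γ))

lemma hitQ_zero_eq (g : ℕ → List (List Γ) → ℝ) (m : ℕ) (w : List (List Γ)) (γ : List Γ) :
    hitQ Δ σ π T g m 0 w γ = if γ = [] then g m w else if γ ∈ T then 1 else 0 := rfl

lemma hitQ_succ_eq (g : ℕ → List (List Γ) → ℝ) (m n : ℕ) (w : List (List Γ)) (γ : List Γ) :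
    hitQ Δ σ π T g m (n+1) w γ = if γ = [] then g m w else if γ ∈ T then 1 else
      ∑' γ', Δ.stepP σ π w γ γ' * hitQ Δ σ π T g m n (w ++ [γ]) γ' := rfl

lemma popV_succ_eq (r : List (List Γ) → ℝ) (m : ℕ) (w : List (List Γ)) (γ : List Γ) :
    popV Δ σ π T r (m+1) w γ = if γ ∈ T ∨ γ = [] then 0 else
      Δ.stepP σ π w γ [] * r (w ++ [γ]) +
        ∑' γ', Δ.stepP σ π w γ γ' * popV Δ σ π T r m (w ++ [γ]) γ' := rfl

lemma popP_nil_eq (w : List (List Γ)) (γ : List Γ) :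
    popP Δ σ π T w γ [] = if γ ∈ T ∨ γ = [] then 0 else Δ.stepP σ π w γ [] := rfl

lemma popP_cons_eq (w : List (List Γ)) (γ γ' : List Γ) (v : List (List Γ)) :
    popP Δ σ π T w γ (γ' :: v) = if γ ∈ T ∨ γ = [] then 0 else
      Δ.stepP σ π w γ γ' * popP Δ σ π T (w ++ [γ]) γ' v := rfl

section hitQlem

variable (g : ℕ → List (List Γ) → ℝ)
  (hg0 : ∀ m w, 0 ≤ g m w) (hg1 : ∀ m w, g m w ≤ 1)

lemma hitQ_nil (m n : ℕ) (w : List (List Γ)) :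
    hitQ Δ σ π T g m n w [] = g m w := by
  cases n with
  | zero => rw [hitQ_zero_eq, if_pos rfl]
  | succ n => rw [hitQ_succ_eq, if_pos rfl]

lemma hitQ_of_mem {γ : List Γ} (hγ : γ ≠ []) (hmem : γ ∈ T) (m n : ℕ) (w : List (List Γ)) :
    hitQ Δ σ π T g m n w γ = 1 := by
  cases n with
  | zero => rw [hitQ_zero_eq, if_neg hγ, if_pos hmem]
  | succ n => rw [hitQ_succ_eq, if_neg hγ, if_pos hmem]

lemma hitQ_zero_of {γ : List Γ} (hγ : γ ≠ []) (hmem : γ ∉ T) (m : ℕ) (w : List (List Γ)) :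
    hitQ Δ σ π T g m 0 w γ = 0 := by
  rw [hitQ_zero_eq, if_neg hγ, if_neg hmem]

lemma hitQ_succ_of {γ : List Γ} (hγ : γ ≠ []) (hmem : γ ∉ T) (m n : ℕ) (w : List (List Γ)) :
    hitQ Δ σ π T g m (n+1) w γ
      = ∑' γ', Δ.stepP σ π w γ γ' * hitQ Δ σ π T g m n (w ++ [γ]) γ' := by
  rw [hitQ_succ_eq, if_neg hγ, if_neg hmem]

include hg0 in
lemma hitQ_nonneg : ∀ (n : ℕ) (m : ℕ) (w : List (List Γ)) (γ : List Γ),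
    0 ≤ hitQ Δ σ π T g m n w γ := by
  intro n
  induction n with
  | zero =>
    intro m w γ
    rw [hitQ_zero_eq]
    split
    · exact hg0 m w
    · split <;> norm_num
  | succ n ih =>
    intro m w γ
    rw [hitQ_succ_eq]
    split
    · exact hg0 m w
    · split
      · norm_num
      · exact tsum_nonneg fun γ' => mul_nonneg (stepP_nonneg Δ σ π _ _ _) (ih m _ γ')

include hg0 hg1 in
lemma hitQ_le_one : ∀ (n : ℕ) (m : ℕ) (w : List (List Γ)) (γ : List Γ),
    hitQ Δ σ π T g m n w γ ≤ 1 := by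
  intro n
  induction n with
  | zero =>
    intro m w γ
    rw [hitQ_zero_eq]
    split
    · exact hg1 m w
    · split <;> norm_num
  | succ n ih =>
    intro m w γ
    rw [hitQ_succ_eq]
    split
    · exact hg1 m w
    · split
      · norm_num
      · exact step_mul_tsum_le_one Δ σ π _ _ (fun γ' => hitQ_nonneg σ π T g hg0 n m _ γ')
          (fun γ' => ih m _ γ')

include hg0 hg1 in
lemma hitQ_mono_m (hgm : ∀ w, Monotone fun m => g m w) :
    ∀ (n : ℕ) (m m' : ℕ), m ≤ m' → ∀ (w : List (List Γ)) (γ : List Γ),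
    hitQ Δ σ π T g m n w γ ≤ hitQ Δ σ π T g m' n w γ := by
  intro n
  induction n with
  | zero =>
    intro m m' hm w γ
    rw [hitQ_zero_eq, hitQ_zero_eq]
    split
    · exact hgm w hm
    · exact le_refl _
  | succ n ih =>
    intro m m' hm w γ
    rw [hitQ_succ_eq, hitQ_succ_eq]
    split
    · exact hgm w hm
    · split
      · exact le_refl _
      · refine Summable.tsum_le_tsum (fun γ' => mul_le_mul_of_nonneg_left (ih m m' hm _ γ')
          (stepP_nonneg Δ σ π _ _ _)) ?_ ?_
        · exact step_mul_summable Δ σ π _ _ (fun γ' => hitQ_nonneg σ π T g hg0 n m _ γ')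
            (fun γ' => hitQ_le_one σ π T g hg0 hg1 n m _ γ')
        · exact step_mul_summable Δ σ π _ _ (fun γ' => hitQ_nonneg σ π T g hg0 n m' _ γ')
            (fun γ' => hitQ_le_one σ π T g hg0 hg1 n m' _ γ')

end hitQlem

section popVlem

variable (r : List (List Γ) → ℝ) (hr0 : ∀ w, 0 ≤ r w) (hr1 : ∀ w, r w ≤ 1)

lemma popV_zero (w : List (List Γ)) (γ : List Γ) : popV Δ σ π T r 0 w γ = 0 := rfl

lemma popV_nil (m : ℕ) (w : List (List Γ)) : popV Δ σ π T r m w [] = 0 := by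
  cases m with
  | zero => rfl
  | succ m => rw [popV_succ_eq, if_pos (Or.inr rfl)]

lemma popV_succ_of {γ : List Γ} (hγ : ¬ (γ ∈ T ∨ γ = [])) (m : ℕ) (w : List (List Γ)) :
    popV Δ σ π T r (m+1) w γ = Δ.stepP σ π w γ [] * r (w ++ [γ]) +
      ∑' γ', Δ.stepP σ π w γ γ' * popV Δ σ π T r m (w ++ [γ]) γ' := by
  rw [popV_succ_eq, if_neg hγ]

include hr0 in
lemma popV_nonneg : ∀ (m : ℕ) (w : List (List Γ)) (γ : List Γ), 0 ≤ popV Δ σ π T r m w γ := by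
  intro m
  induction m with
  | zero => intro w γ; rw [popV_zero]
  | succ m ih =>
    intro w γ
    rw [popV_succ_eq]
    split
    · exact le_refl _
    · refine add_nonneg (mul_nonneg (stepP_nonneg Δ σ π _ _ _) (hr0 _)) ?_
      exact tsum_nonneg fun γ' => mul_nonneg (stepP_nonneg Δ σ π _ _ _) (ih _ γ')

include hr0 hr1 in
/-- Key conservation bound: reach value plus pop value is at most one. -/
lemma reachN_add_popV_le_one (hTnil : ([] : List Γ) ∉ T) :
    ∀ (m : ℕ) (w : List (List Γ)) (γ : List Γ),
    Δ.reachN σ π T m w γ + popV Δ σ π T r m w γ ≤ 1 := by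
  intro m
  induction m with
  | zero =>
    intro w γ
    rw [popV_zero, reachN_zero]
    split <;> norm_num
  | succ m ih =>
    intro w γ
    by_cases hguard : γ ∈ T ∨ γ = []
    · have hpv : popV Δ σ π T r (m+1) w γ = 0 := by rw [popV_succ_eq, if_pos hguard]
      rw [hpv, add_zero]
      exact reachN_le_one Δ σ π T _ _ _
    · push_neg at hguard
      obtain ⟨hmem, hγ⟩ := hguard
      rw [popV_succ_of σ π T r (by tauto) m w,
        reachN_succ_of_not_mem Δ σ π T hmem m w]
      -- combine sums
      have hsum1 : Summable fun γ' => Δ.stepP σ π w γ γ' * Δ.reachN σ π T m (w ++ [γ]) γ' :=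
        reachN_summable Δ σ π T m w _ γ
      have hsum2 : Summable fun γ' => Δ.stepP σ π w γ γ' * popV Δ σ π T r m (w ++ [γ]) γ' :=
        step_mul_summable Δ σ π w γ (fun γ' => popV_nonneg σ π T r hr0 m _ γ')
          (fun γ' => by
            have := ih (w ++ [γ]) γ'
            have h0 := reachN_nonneg Δ σ π T m (w ++ [γ]) γ'
            linarith)
      have hre : Δ.stepP σ π w γ [] * r (w ++ [γ])
          = ∑' γ', Δ.stepP σ π w γ γ' * (if γ' = [] then r (w ++ [γ]) else 0) := by
        rw [tsum_eq_single ([] : List Γ) (fun γ' hne => by rw [if_neg hne, mul_zero])]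
        rw [if_pos rfl]
      have hind0 : ∀ γ' : List Γ, 0 ≤ (if γ' = [] then r (w ++ [γ]) else 0) := by
        intro γ'
        split
        · exact hr0 _
        · exact le_refl 0
      have hind1 : ∀ γ' : List Γ, (if γ' = [] then r (w ++ [γ]) else 0) ≤ 1 := by
        intro γ'
        split
        · exact hr1 _
        · norm_num
      have hsum3 : Summable fun γ' => Δ.stepP σ π w γ γ' *
          (if γ' = [] then r (w ++ [γ]) else 0) :=
        step_mul_summable Δ σ π w γ hind0 hind1
      calc (∑' γ', Δ.stepP σ π w γ γ' * Δ.reachN σ π T m (w ++ [γ]) γ')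
            + (Δ.stepP σ π w γ [] * r (w ++ [γ])
              + ∑' γ', Δ.stepP σ π w γ γ' * popV Δ σ π T r m (w ++ [γ]) γ')
          = ∑' γ', (Δ.stepP σ π w γ γ' * Δ.reachN σ π T m (w ++ [γ]) γ'
              + (Δ.stepP σ π w γ γ' * (if γ' = [] then r (w ++ [γ]) else 0)
              + Δ.stepP σ π w γ γ' * popV Δ σ π T r m (w ++ [γ]) γ')) := by
            rw [hre, ← Summable.tsum_add hsum3 hsum2, ← Summable.tsum_add hsum1 (hsum3.add hsum2)]
        _ ≤ ∑' γ', Δ.stepP σ π w γ γ' := by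
            refine Summable.tsum_le_tsum (fun γ' => ?_) ?_ (stepP_summable Δ σ π w γ)
            · rcases eq_or_ne γ' ([] : List Γ) with rfl | hne
              · rw [reachN_nil Δ σ π T hTnil, popV_nil, if_pos rfl]
                have h1 := hr1 (w ++ [γ])
                have h2 := stepP_nonneg Δ σ π w γ ([] : List Γ)
                nlinarith
              · rw [if_neg hne, mul_zero, zero_add, ← mul_add]
                have h2 := stepP_nonneg Δ σ π w γ γ'
                have h3 := ih (w ++ [γ]) γ'
                nlinarith
            · exact (hsum1.add (hsum3.add hsum2))
        _ = 1 := stepP_tsum_one Δ σ π w γ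

include hr0 hr1 in
lemma popV_le_one (hTnil : ([] : List Γ) ∉ T) (m : ℕ) (w : List (List Γ)) (γ : List Γ) :
    popV Δ σ π T r m w γ ≤ 1 := by
  have := reachN_add_popV_le_one σ π T r hr0 hr1 hTnil m w γ
  have h0 := reachN_nonneg Δ σ π T m w γ
  linarith

include hr0 hr1 in
lemma popV_mono_m (hTnil : ([] : List Γ) ∉ T) :
    ∀ (m m' : ℕ), m ≤ m' → ∀ (w : List (List Γ)) (γ : List Γ),
    popV Δ σ π T r m w γ ≤ popV Δ σ π T r m' w γ := by
  have key : ∀ (m : ℕ) (w : List (List Γ)) (γ : List Γ),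
      popV Δ σ π T r m w γ ≤ popV Δ σ π T r (m+1) w γ := by
    intro m
    induction m with
    | zero => intro w γ; rw [popV_zero]; exact popV_nonneg σ π T r hr0 1 w γ
    | succ m ih =>
      intro w γ
      by_cases hguard : γ ∈ T ∨ γ = []
      · rw [popV_succ_eq, if_pos hguard, popV_succ_eq, if_pos hguard]
      · rw [popV_succ_of σ π T r hguard, popV_succ_of σ π T r hguard]
        refine add_le_add (le_refl _) ?_
        refine Summable.tsum_le_tsum (fun γ' => mul_le_mul_of_nonneg_left (ih _ γ')
          (stepP_nonneg Δ σ π _ _ _)) ?_ ?_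
        · exact step_mul_summable Δ σ π _ _ (fun γ' => popV_nonneg σ π T r hr0 m _ γ')
            (fun γ' => popV_le_one σ π T r hr0 hr1 hTnil m _ γ')
        · exact step_mul_summable Δ σ π _ _ (fun γ' => popV_nonneg σ π T r hr0 (m+1) _ γ')
            (fun γ' => popV_le_one σ π T r hr0 hr1 hTnil (m+1) _ γ')
  intro m m' hm w γ
  induction m' with
  | zero => rw [Nat.le_zero.mp hm]
  | succ m' ih =>
    rcases Nat.lt_or_ge m (m'+1) with h | h
    · exact le_trans (ih (Nat.lt_succ_iff.mp h)) (key m' w γ)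
    · rw [Nat.le_antisymm hm h]

lemma popP_nonneg : ∀ (v : List (List Γ)) (w : List (List Γ)) (γ : List Γ),
    0 ≤ popP Δ σ π T w γ v := by
  intro v
  induction v with
  | nil =>
    intro w γ
    rw [popP_nil_eq]
    split
    · exact le_refl _
    · exact stepP_nonneg Δ σ π _ _ _
  | cons γ' v ih =>
    intro w γ
    rw [popP_cons_eq]
    split
    · exact le_refl _
    · exact mul_nonneg (stepP_nonneg Δ σ π _ _ _) (ih _ γ')

end popVlem

end BPA
namespace BPA

variable {Γ : Type*} [Fintype Γ] {Δ : BPA Γ} (σ : Δ.Strat Δ.isBox) (π : Δ.Strat Δ.isDiamond)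
  (T : Set (List Γ))

lemma stepP_le_one (w : List (List Γ)) (c c' : List Γ) : Δ.stepP σ π w c c' ≤ 1 := by
  have h1 := Summable.le_tsum (stepP_summable Δ σ π w c) c' (fun b _ => stepP_nonneg Δ σ π w c b)
  rw [stepP_tsum_one Δ σ π w c] at h1
  exact h1

section Sub

variable {r r' : List (List Γ) → ℝ}

lemma popV_mono_r (hr0 : ∀ w, 0 ≤ r w) (hr'1 : ∀ w, r' w ≤ 1) (hTnil : ([] : List Γ) ∉ T)
    (hle : ∀ w, r w ≤ r' w) :
    ∀ (m : ℕ) (w : List (List Γ)) (γ : List Γ),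
    popV Δ σ π T r m w γ ≤ popV Δ σ π T r' m w γ := by
  have hr1 : ∀ w, r w ≤ 1 := fun w => le_trans (hle w) (hr'1 w)
  have hr'0 : ∀ w, 0 ≤ r' w := fun w => le_trans (hr0 w) (hle w)
  intro m
  induction m with
  | zero => intro w γ; rw [popV_zero, popV_zero]
  | succ m ih =>
    intro w γ
    by_cases hguard : γ ∈ T ∨ γ = []
    · rw [popV_succ_eq, if_pos hguard, popV_succ_eq, if_pos hguard]
    · rw [popV_succ_of σ π T r hguard, popV_succ_of σ π T r' hguard]
      refine add_le_add (mul_le_mul_of_nonneg_left (hle _) (stepP_nonneg Δ σ π _ _ _)) ?_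
      refine Summable.tsum_le_tsum (fun γ' => mul_le_mul_of_nonneg_left (ih _ γ')
        (stepP_nonneg Δ σ π _ _ _)) ?_ ?_
      · exact step_mul_summable Δ σ π _ _ (fun γ' => popV_nonneg σ π T r hr0 m _ γ')
          (fun γ' => popV_le_one σ π T r hr0 hr1 hTnil m _ γ')
      · exact step_mul_summable Δ σ π _ _ (fun γ' => popV_nonneg σ π T r' hr'0 m _ γ')
          (fun γ' => popV_le_one σ π T r' hr'0 hr'1 hTnil m _ γ')

/-- Strict improvement along a fixed pop path. -/
lemma popV_sub (hr0 : ∀ w, 0 ≤ r w) (hr1 : ∀ w, r w ≤ 1) (hTnil : ([] : List Γ) ∉ T) :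
    ∀ (v : List (List Γ)) (k : ℕ) (w : List (List Γ)) (γ : List Γ),
    popV Δ σ π T r (v.length + 1 + k) w γ
      ≤ popV Δ σ π T (fun _ => 1) (v.length + 1 + k) w γ
        - popP Δ σ π T w γ v * (1 - r (w ++ [γ] ++ v)) := by
  have hone0 : ∀ w : List (List Γ), (0:ℝ) ≤ (fun _ => (1:ℝ)) w := fun _ => by norm_num
  have hone1 : ∀ w : List (List Γ), (fun _ => (1:ℝ)) w ≤ 1 := fun _ => le_refl 1
  intro v
  induction v with
  | nil =>
    intro k w γ
    rw [show ([] : List (List Γ)).length + 1 + k = k + 1 by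
      simp only [List.length_nil]; omega]
    by_cases hguard : γ ∈ T ∨ γ = []
    · rw [popV_succ_eq, if_pos hguard, popV_succ_eq, if_pos hguard, popP_nil_eq, if_pos hguard]
      norm_num
    · 
      rw [popV_succ_of σ π T r hguard, popV_succ_of σ π T (fun _ => 1) hguard,
        popP_nil_eq, if_neg hguard]
      have hA : (∑' γ', Δ.stepP σ π w γ γ' * popV Δ σ π T r k (w ++ [γ]) γ')
          ≤ ∑' γ', Δ.stepP σ π w γ γ' * popV Δ σ π T (fun _ => 1) k (w ++ [γ]) γ' := by
        refine Summable.tsum_le_tsum (fun γ' => mul_le_mul_of_nonneg_left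
          (popV_mono_r σ π T hr0 hone1 hTnil hr1 k _ γ') (stepP_nonneg Δ σ π _ _ _)) ?_ ?_
        · exact step_mul_summable Δ σ π _ _ (fun γ' => popV_nonneg σ π T r hr0 k _ γ')
            (fun γ' => popV_le_one σ π T r hr0 hr1 hTnil k _ γ')
        · exact step_mul_summable Δ σ π _ _ (fun γ' => popV_nonneg σ π T _ hone0 k _ γ')
            (fun γ' => popV_le_one σ π T _ hone0 hone1 hTnil k _ γ')
      have harg : w ++ [γ] ++ ([] : List (List Γ)) = w ++ [γ] := List.append_nil _
      rw [harg]
      nlinarith [stepP_nonneg Δ σ π w γ ([] : List Γ)]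
  | cons γ₀ v' ih =>
    intro k w γ
    rw [show (γ₀ :: v').length + 1 + k = (v'.length + 1 + k) + 1 by
      simp only [List.length_cons]; omega]
    by_cases hguard : γ ∈ T ∨ γ = []
    · rw [popV_succ_eq, if_pos hguard, popV_succ_eq, if_pos hguard, popP_cons_eq,
        if_pos hguard]
      norm_num
    · set m' := v'.length + 1 + k with hm'
      rw [popV_succ_of σ π T r hguard, popV_succ_of σ π T (fun _ => 1) hguard,
        popP_cons_eq, if_neg hguard]
      set d : ℝ := popP Δ σ π T (w ++ [γ]) γ₀ v' * (1 - r (w ++ [γ] ++ (γ₀ :: v'))) with hd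
      have harg : (w ++ [γ]) ++ [γ₀] ++ v' = w ++ [γ] ++ (γ₀ :: v') := by simp
      have hIH : popV Δ σ π T r m' (w ++ [γ]) γ₀
          ≤ popV Δ σ π T (fun _ => 1) m' (w ++ [γ]) γ₀
            - popP Δ σ π T (w ++ [γ]) γ₀ v' * (1 - r (w ++ [γ] ++ (γ₀ :: v'))) := by
        have := ih k (w ++ [γ]) γ₀
        rwa [harg] at this
      -- pointwise comparison of the sums
      have hsumr : Summable fun γ' => Δ.stepP σ π w γ γ' * popV Δ σ π T r m' (w ++ [γ]) γ' :=
        step_mul_summable Δ σ π _ _ (fun γ' => popV_nonneg σ π T r hr0 m' _ γ')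
          (fun γ' => popV_le_one σ π T r hr0 hr1 hTnil m' _ γ')
      have hsum1 : Summable fun γ' => Δ.stepP σ π w γ γ' *
          popV Δ σ π T (fun _ => 1) m' (w ++ [γ]) γ' :=
        step_mul_summable Δ σ π _ _ (fun γ' => popV_nonneg σ π T _ hone0 m' _ γ')
          (fun γ' => popV_le_one σ π T _ hone0 hone1 hTnil m' _ γ')
      have hsumind : Summable fun γ' => (if γ' = γ₀ then Δ.stepP σ π w γ γ₀ * d else 0) :=
        (hasSum_ite_eq γ₀ (Δ.stepP σ π w γ γ₀ * d)).summable
      have hkey : (∑' γ', Δ.stepP σ π w γ γ' * popV Δ σ π T r m' (w ++ [γ]) γ')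
          ≤ (∑' γ', Δ.stepP σ π w γ γ' * popV Δ σ π T (fun _ => 1) m' (w ++ [γ]) γ')
            - Δ.stepP σ π w γ γ₀ * d := by
        have hpt : ∀ γ', Δ.stepP σ π w γ γ' * popV Δ σ π T r m' (w ++ [γ]) γ'
            ≤ Δ.stepP σ π w γ γ' * popV Δ σ π T (fun _ => 1) m' (w ++ [γ]) γ'
              - (if γ' = γ₀ then Δ.stepP σ π w γ γ₀ * d else 0) := by
          intro γ'
          rcases eq_or_ne γ' γ₀ with rfl | hne
          · rw [if_pos rfl]
            have := mul_le_mul_of_nonneg_left hIH (stepP_nonneg Δ σ π w γ γ')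
            rw [mul_sub] at this
            exact this
          · rw [if_neg hne, sub_zero]
            exact mul_le_mul_of_nonneg_left
              (popV_mono_r σ π T hr0 hone1 hTnil hr1 m' _ γ') (stepP_nonneg Δ σ π _ _ _)
        calc (∑' γ', Δ.stepP σ π w γ γ' * popV Δ σ π T r m' (w ++ [γ]) γ')
            ≤ ∑' γ', (Δ.stepP σ π w γ γ' * popV Δ σ π T (fun _ => 1) m' (w ++ [γ]) γ'
              - (if γ' = γ₀ then Δ.stepP σ π w γ γ₀ * d else 0)) :=
              Summable.tsum_le_tsum hpt hsumr (hsum1.sub hsumind)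
          _ = (∑' γ', Δ.stepP σ π w γ γ' * popV Δ σ π T (fun _ => 1) m' (w ++ [γ]) γ')
              - ∑' γ', (if γ' = γ₀ then Δ.stepP σ π w γ γ₀ * d else 0) :=
              Summable.tsum_sub hsum1 hsumind
          _ = (∑' γ', Δ.stepP σ π w γ γ' * popV Δ σ π T (fun _ => 1) m' (w ++ [γ]) γ')
              - Δ.stepP σ π w γ γ₀ * d := by rw [tsum_ite_eq]
      have hs0 : Δ.stepP σ π w γ [] * r (w ++ [γ]) ≤ Δ.stepP σ π w γ [] * 1 :=
        mul_le_mul_of_nonneg_left (hr1 _) (stepP_nonneg Δ σ π _ _ _)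
      have : Δ.stepP σ π w γ γ₀ * popP Δ σ π T (w ++ [γ]) γ₀ v'
            * (1 - r (w ++ [γ] ++ (γ₀ :: v'))) = Δ.stepP σ π w γ γ₀ * d := by
        rw [hd]; ring
      rw [this]
      linarith
  
/-- Positive pop value yields a positive-probability pop path. -/
lemma popV_pos_ext (hr0 : ∀ w, 0 ≤ r w) :
    ∀ (m : ℕ) (w : List (List Γ)) (γ : List Γ),
    0 < popV Δ σ π T r m w γ → ∃ v, 0 < popP Δ σ π T w γ v := by
  intro m
  induction m with
  | zero =>
    intro w γ h
    rw [popV_zero] at h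
    exact absurd h (lt_irrefl 0)
  | succ m ih =>
    intro w γ h
    by_cases hguard : γ ∈ T ∨ γ = []
    · rw [popV_succ_eq, if_pos hguard] at h
      exact absurd h (lt_irrefl 0)
    · rw [popV_succ_of σ π T r hguard] at h
      by_cases h1 : 0 < Δ.stepP σ π w γ []
      · exact ⟨[], by rw [popP_nil_eq, if_neg hguard]; exact h1⟩
      · have h1' : Δ.stepP σ π w γ [] = 0 :=
          le_antisymm (not_lt.mp h1) (stepP_nonneg Δ σ π _ _ _)
        rw [h1', zero_mul, zero_add] at h
        have hex : ∃ γ', Δ.stepP σ π w γ γ' * popV Δ σ π T r m (w ++ [γ]) γ' ≠ 0 := by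
          by_contra hall
          push_neg at hall
          rw [tsum_congr hall, tsum_zero] at h
          exact absurd h (lt_irrefl 0)
        obtain ⟨γ', hγ'⟩ := hex
        have hst : 0 < Δ.stepP σ π w γ γ' := by
          rcases eq_or_lt_of_le (stepP_nonneg Δ σ π w γ γ') with he | hl
          · exact absurd (by rw [← he, zero_mul]) hγ'
          · exact hl
        have hpv : 0 < popV Δ σ π T r m (w ++ [γ]) γ' := by
          rcases eq_or_lt_of_le (popV_nonneg σ π T r hr0 m (w ++ [γ]) γ') with he | hl
          · exact absurd (by rw [← he, mul_zero]) hγ'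
          · exact hl
        obtain ⟨v', hv'⟩ := ih _ γ' hpv
        exact ⟨γ' :: v', by
          rw [popP_cons_eq, if_neg hguard]
          exact mul_pos hst hv'⟩

end Sub

end BPA
namespace BPA

variable {Γ : Type*} [Fintype Γ] {Δ : BPA Γ}

/-- Case (iii): a `C` symbol on top of a Diamond-winning configuration is winning. -/
lemma mem_W_cons_of_C {ΓT : Set Γ} {X : Γ}
    (hX : [X] ∈ Δ.WDiaLtOne (topLang ΓT)) {β : List Γ}
    (hβ : β ∈ Δ.WDiaLtOne (topLang ΓT)) :
    X :: β ∈ Δ.WDiaLtOne (topLang ΓT) := by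
  obtain ⟨πX, hπX⟩ := hX
  obtain ⟨πβ, hπβ⟩ := hβ
  have hTnil : ([] : List Γ) ∉ topLang ΓT := topLang_nil
  refine ⟨πX.comp (fun _ => πβ) β, fun σB => ?_⟩
  set T : Set (List Γ) := topLang ΓT with hTdef
  set πC : Δ.Strat Δ.isDiamond := πX.comp (fun _ => πβ) β with hπC
  set σ1 : Δ.Strat Δ.isBox := σB.pushdown β with hσ1
  set r : List (List Γ) → ℝ := fun w => Δ.reachP (σB.shift (lift β w)) πβ T β with hr
  have hrlt : ∀ w, r w < 1 := fun w => hπβ _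
  have hr0 : ∀ w, 0 ≤ r w := fun w => reachP_nonneg Δ _ πβ T β
  have hr1 : ∀ w, r w ≤ 1 := fun w => le_of_lt (hrlt w)
  set g : ℕ → List (List Γ) → ℝ := fun _ w => r w with hg
  have hg0 : ∀ m w, 0 ≤ g m w := fun _ w => hr0 w
  have hg1 : ∀ m w, g m w ≤ 1 := fun _ w => hr1 w
  -- phase-2 shift
  have hshift : ∀ (w : List (List Γ)), (∀ x ∈ w, x ≠ ([] : List Γ)) → ∀ n,
      Δ.reachN σB πC T n (lift β w) β
        = Δ.reachN (σB.shift (lift β w)) πβ T n [] β := by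
    intro w hw n
    have hch : ∀ (u : List (List Γ)) (c : List Γ),
        ((u = [] ∧ c = β) ∨ (∃ rest, u = β :: rest)) →
        ∀ α, Δ.choice σB πC (lift β w ++ u) c α
          = Δ.choice (σB.shift (lift β w)) πβ u c α := by
      intro u c hu α
      cases c with
      | nil => rfl
      | cons Z t =>
        refine choice_congr Δ σB (σB.shift (lift β w)) πC πβ (fun α' => rfl)
          (fun α' => ?_) α
        exact comp_f_phase2 πX (fun _ => πβ) β w hw u (Z :: t) hu α'
    have h := reachN_shift Δ σB (σB.shift (lift β w)) πC πβ T (lift β w) β hch n [] β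
      (Or.inl ⟨rfl, rfl⟩)
    rwa [List.append_nil] at h
  -- phase-1 choice correspondence
  have hch1 : ∀ (w : List (List Γ)) (γ : List Γ), (∀ x ∈ w, x ≠ ([] : List Γ)) → γ ≠ [] →
      ∀ α, Δ.choice σB πC (lift β w) (γ ++ β) α = Δ.choice σ1 πX w γ α := by
    intro w γ hw hγ
    cases γ with
    | nil => exact absurd rfl hγ
    | cons Z t =>
      intro α
      refine choice_congr Δ σB σ1 πC πX (fun α' => rfl) (fun α' => ?_) α
      exact comp_f_phase1 πX (fun _ => πβ) β w (Z :: t) hw (List.cons_ne_nil Z t) α'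
  -- main comparison with the hitQ value
  have hmain : ∀ (n : ℕ) (w : List (List Γ)) (γ : List Γ), (∀ x ∈ w, x ≠ ([] : List Γ)) →
      Δ.reachN σB πC T n (lift β w) (γ ++ β) ≤ hitQ Δ σ1 πX T g 0 n w γ := by
    intro n
    induction n with
    | zero =>
      intro w γ hw
      by_cases hγ : γ = []
      · subst hγ
        rw [hitQ_nil, List.nil_append, hshift w hw 0]
        exact reachN_le_reachP Δ _ πβ T 0 β
      · by_cases hmem : γ ∈ T
        · rw [hitQ_of_mem σ1 πX T g hγ hmem]
          exact reachN_le_one Δ σB πC T 0 _ _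
        · rw [hitQ_zero_of σ1 πX T g hγ hmem,
            reachN_zero_of_not_mem Δ σB πC T (fun h => hmem ((topLang_append hγ β).mp h)) _]
    | succ n ih =>
      intro w γ hw
      by_cases hγ : γ = []
      · subst hγ
        rw [hitQ_nil, List.nil_append, hshift w hw (n+1)]
        exact reachN_le_reachP Δ _ πβ T (n+1) β
      · by_cases hmem : γ ∈ T
        · rw [hitQ_of_mem σ1 πX T g hγ hmem]
          exact reachN_le_one Δ σB πC T _ _ _
        · have hmem' : γ ++ β ∉ T := fun h => hmem ((topLang_append hγ β).mp h)
          rw [reachN_succ_of_not_mem Δ σB πC T hmem',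
            hitQ_succ_of σ1 πX T g hγ hmem,
            step_reindex Δ σB σ1 πC πX hγ (hch1 w γ hw hγ)]
          have hw' : ∀ x ∈ w ++ [γ], x ≠ ([] : List Γ) := by
            intro x hx
            rcases List.mem_append.mp hx with h | h
            · exact hw x h
            · rw [List.mem_singleton.mp h]; exact hγ
          refine Summable.tsum_le_tsum (fun γ' => ?_) ?_ ?_
          · have h := ih (w ++ [γ]) γ' hw'
            rw [lift_append] at h
            exact mul_le_mul_of_nonneg_left h (stepP_nonneg Δ σ1 πX w γ γ')
          · exact step_mul_summable Δ σ1 πX w γ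
              (fun γ' => reachN_nonneg Δ σB πC T n _ _)
              (fun γ' => reachN_le_one Δ σB πC T n _ _)
          · exact step_mul_summable Δ σ1 πX w γ
              (fun γ' => hitQ_nonneg σ1 πX T g hg0 n 0 _ γ')
              (fun γ' => hitQ_le_one σ1 πX T g hg0 hg1 n 0 _ γ')
  -- bounds on the suprema
  have hbddR : ∀ (w : List (List Γ)) (γ : List Γ),
      BddAbove (Set.range fun m => Δ.reachN σ1 πX T m w γ) :=
    fun w γ => bddAbove_of_le_one fun m => reachN_le_one Δ σ1 πX T m w γ
  have hbddP : ∀ (w : List (List Γ)) (γ : List Γ),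
      BddAbove (Set.range fun m => popV Δ σ1 πX T r m w γ) :=
    fun w γ => bddAbove_of_le_one fun m => popV_le_one σ1 πX T r hr0 hr1 hTnil m w γ
  have hR0 : ∀ (w : List (List Γ)) (γ : List Γ), 0 ≤ ⨆ m, Δ.reachN σ1 πX T m w γ :=
    fun w γ => le_trans (reachN_nonneg Δ σ1 πX T 0 w γ) (le_ciSup (hbddR w γ) 0)
  have hR1 : ∀ (w : List (List Γ)) (γ : List Γ), (⨆ m, Δ.reachN σ1 πX T m w γ) ≤ 1 :=
    fun w γ => ciSup_le fun m => reachN_le_one Δ σ1 πX T m w γ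
  have hP0 : ∀ (w : List (List Γ)) (γ : List Γ), 0 ≤ ⨆ m, popV Δ σ1 πX T r m w γ :=
    fun w γ => le_trans (le_refl 0) (by
      have := le_ciSup (hbddP w γ) 0
      rw [popV_zero] at this
      exact this)
  have hP1 : ∀ (w : List (List Γ)) (γ : List Γ), (⨆ m, popV Δ σ1 πX T r m w γ) ≤ 1 :=
    fun w γ => ciSup_le fun m => popV_le_one σ1 πX T r hr0 hr1 hTnil m w γ
  have hRmono : ∀ (w : List (List Γ)) (γ : List Γ),
      Monotone fun m => Δ.reachN σ1 πX T m w γ :=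
    fun w γ m m' hm => reachN_mono_fuel Δ σ1 πX T m m' hm w γ
  have hPmono : ∀ (w : List (List Γ)) (γ : List Γ),
      Monotone fun m => popV Δ σ1 πX T r m w γ :=
    fun w γ m m' hm => popV_mono_m σ1 πX T r hr0 hr1 hTnil m m' hm w γ
  have hRP1 : ∀ (w : List (List Γ)) (γ : List Γ),
      (⨆ m, Δ.reachN σ1 πX T m w γ) + (⨆ m, popV Δ σ1 πX T r m w γ) ≤ 1 := by
    intro w γ
    rw [← ciSup_add_ciSup_of_monotone (hRmono w γ) (hPmono w γ)
      (fun m => reachN_le_one Δ σ1 πX T m w γ)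
      (fun m => popV_le_one σ1 πX T r hr0 hr1 hTnil m w γ)]
    exact ciSup_le fun m => reachN_add_popV_le_one σ1 πX T r hr0 hr1 hTnil m w γ
  -- one-step bounds for the suprema
  have hRstep : ∀ (w : List (List Γ)) (γ : List Γ), γ ∉ T →
      (∑' γ', Δ.stepP σ1 πX w γ γ' * ⨆ m, Δ.reachN σ1 πX T m (w ++ [γ]) γ')
        ≤ ⨆ m, Δ.reachN σ1 πX T m w γ := by
    intro w γ hmem
    rw [tsum_mul_iSup_eq (fun m γ' => Δ.reachN σ1 πX T m (w ++ [γ]) γ')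
      (fun γ' => stepP_nonneg Δ σ1 πX w γ γ') (stepP_summable Δ σ1 πX w γ)
      (fun m γ' => reachN_nonneg Δ σ1 πX T m _ γ')
      (fun m γ' => reachN_le_one Δ σ1 πX T m _ γ')
      (fun γ' m m' hm => reachN_mono_fuel Δ σ1 πX T m m' hm _ γ')]
    refine ciSup_le fun m => ?_
    rw [← reachN_succ_of_not_mem Δ σ1 πX T hmem m w]
    exact le_ciSup (hbddR w γ) (m+1)
  have hPstep : ∀ (w : List (List Γ)) (γ : List Γ), ¬ (γ ∈ T ∨ γ = []) →
      Δ.stepP σ1 πX w γ [] * r (w ++ [γ])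
        + (∑' γ', Δ.stepP σ1 πX w γ γ' * ⨆ m, popV Δ σ1 πX T r m (w ++ [γ]) γ')
        ≤ ⨆ m, popV Δ σ1 πX T r m w γ := by
    intro w γ hguard
    rw [tsum_mul_iSup_eq (fun m γ' => popV Δ σ1 πX T r m (w ++ [γ]) γ')
      (fun γ' => stepP_nonneg Δ σ1 πX w γ γ') (stepP_summable Δ σ1 πX w γ)
      (fun m γ' => popV_nonneg σ1 πX T r hr0 m _ γ')
      (fun m γ' => popV_le_one σ1 πX T r hr0 hr1 hTnil m _ γ')
      (fun γ' m m' hm => popV_mono_m σ1 πX T r hr0 hr1 hTnil m m' hm _ γ')]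
    have hc1 : Δ.stepP σ1 πX w γ [] * r (w ++ [γ]) ≤ 1 :=
      mul_le_one₀ (stepP_le_one σ1 πX w γ []) (hr0 _) (hr1 _)
    have hsums1 : ∀ m, (∑' γ', Δ.stepP σ1 πX w γ γ' * popV Δ σ1 πX T r m (w ++ [γ]) γ') ≤ 1 :=
      fun m => step_mul_tsum_le_one Δ σ1 πX w γ
        (fun γ' => popV_nonneg σ1 πX T r hr0 m _ γ')
        (fun γ' => popV_le_one σ1 πX T r hr0 hr1 hTnil m _ γ')
    have hmonoS : Monotone fun m =>
        ∑' γ', Δ.stepP σ1 πX w γ γ' * popV Δ σ1 πX T r m (w ++ [γ]) γ' := by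
      intro m m' hm
      refine Summable.tsum_le_tsum (fun γ' => mul_le_mul_of_nonneg_left
        (popV_mono_m σ1 πX T r hr0 hr1 hTnil m m' hm _ γ') (stepP_nonneg Δ σ1 πX _ _ _)) ?_ ?_
      · exact step_mul_summable Δ σ1 πX _ _ (fun γ' => popV_nonneg σ1 πX T r hr0 m _ γ')
          (fun γ' => popV_le_one σ1 πX T r hr0 hr1 hTnil m _ γ')
      · exact step_mul_summable Δ σ1 πX _ _ (fun γ' => popV_nonneg σ1 πX T r hr0 m' _ γ')
          (fun γ' => popV_le_one σ1 πX T r hr0 hr1 hTnil m' _ γ')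
    have hconst : (⨆ _ : ℕ, Δ.stepP σ1 πX w γ [] * r (w ++ [γ]))
        = Δ.stepP σ1 πX w γ [] * r (w ++ [γ]) := ciSup_const
    rw [← hconst, ← ciSup_add_ciSup_of_monotone monotone_const hmonoS
      (fun _ => hc1) hsums1]
    refine ciSup_le fun m => ?_
    rw [← popV_succ_of σ1 πX T r hguard m w]
    exact le_ciSup (hbddP w γ) (m+1)
  -- the C1 bound: hitQ is dominated by reach-sup plus pop-sup
  have hC1 : ∀ (n : ℕ) (w : List (List Γ)) (γ : List Γ), γ ≠ [] →
      hitQ Δ σ1 πX T g 0 n w γ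
        ≤ (⨆ m, Δ.reachN σ1 πX T m w γ) + ⨆ m, popV Δ σ1 πX T r m w γ := by
    intro n
    induction n with
    | zero =>
      intro w γ hγ
      by_cases hmem : γ ∈ T
      · rw [hitQ_of_mem σ1 πX T g hγ hmem]
        have h1 : (1:ℝ) ≤ ⨆ m, Δ.reachN σ1 πX T m w γ := by
          have := le_ciSup (hbddR w γ) 0
          rw [reachN_of_mem Δ σ1 πX T hmem 0 w] at this
          exact this
        linarith [hP0 w γ]
      · rw [hitQ_zero_of σ1 πX T g hγ hmem]
        exact add_nonneg (hR0 w γ) (hP0 w γ)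
    | succ n ih =>
      intro w γ hγ
      by_cases hmem : γ ∈ T
      · rw [hitQ_of_mem σ1 πX T g hγ hmem]
        have h1 : (1:ℝ) ≤ ⨆ m, Δ.reachN σ1 πX T m w γ := by
          have := le_ciSup (hbddR w γ) 0
          rw [reachN_of_mem Δ σ1 πX T hmem 0 w] at this
          exact this
        linarith [hP0 w γ]
      · rw [hitQ_succ_of σ1 πX T g hγ hmem]
        set B1 : List Γ → ℝ := fun γ' => if γ' = [] then 0
          else ⨆ m, Δ.reachN σ1 πX T m (w ++ [γ]) γ' with hB1
        set B2 : List Γ → ℝ := fun γ' => if γ' = [] then r (w ++ [γ])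
          else ⨆ m, popV Δ σ1 πX T r m (w ++ [γ]) γ' with hB2
        have hB10 : ∀ γ', 0 ≤ B1 γ' := by
          intro γ'; rw [hB1]; dsimp only; split
          · exact le_refl 0
          · exact hR0 _ _
        have hB11 : ∀ γ', B1 γ' ≤ 1 := by
          intro γ'; rw [hB1]; dsimp only; split
          · norm_num
          · exact hR1 _ _
        have hB20 : ∀ γ', 0 ≤ B2 γ' := by
          intro γ'; rw [hB2]; dsimp only; split
          · exact hr0 _
          · exact hP0 _ _
        have hB21 : ∀ γ', B2 γ' ≤ 1 := by
          intro γ'; rw [hB2]; dsimp only; split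
          · exact hr1 _
          · exact hP1 _ _
        have hsumB1 : Summable fun γ' => Δ.stepP σ1 πX w γ γ' * B1 γ' :=
          step_mul_summable Δ σ1 πX w γ hB10 hB11
        have hsumB2 : Summable fun γ' => Δ.stepP σ1 πX w γ γ' * B2 γ' :=
          step_mul_summable Δ σ1 πX w γ hB20 hB21
        have hptw : ∀ γ', hitQ Δ σ1 πX T g 0 n (w ++ [γ]) γ' ≤ B1 γ' + B2 γ' := by
          intro γ'
          rcases eq_or_ne γ' ([] : List Γ) with rfl | hne
          · rw [hitQ_nil, hB1, hB2]
            dsimp only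
            rw [if_pos rfl, if_pos rfl, zero_add]
          · have h := ih (w ++ [γ]) γ' hne
            rw [hB1, hB2]
            dsimp only
            rw [if_neg hne, if_neg hne]
            exact h
        calc (∑' γ', Δ.stepP σ1 πX w γ γ' * hitQ Δ σ1 πX T g 0 n (w ++ [γ]) γ')
            ≤ ∑' γ', Δ.stepP σ1 πX w γ γ' * (B1 γ' + B2 γ') := by
              refine Summable.tsum_le_tsum (fun γ' => mul_le_mul_of_nonneg_left (hptw γ')
                (stepP_nonneg Δ σ1 πX _ _ _)) ?_ ?_
              · exact step_mul_summable Δ σ1 πX w γ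
                  (fun γ' => hitQ_nonneg σ1 πX T g hg0 n 0 _ γ')
                  (fun γ' => hitQ_le_one σ1 πX T g hg0 hg1 n 0 _ γ')
              · exact step_mul_summable Δ σ1 πX w γ
                  (fun γ' => add_nonneg (hB10 γ') (hB20 γ'))
                  (fun γ' => by
                    rw [hB1, hB2]
                    dsimp only
                    rcases eq_or_ne γ' ([] : List Γ) with rfl | hne
                    · rw [if_pos rfl, if_pos rfl, zero_add]; exact hr1 _
                    · rw [if_neg hne, if_neg hne]; exact hRP1 _ _)
          _ = (∑' γ', Δ.stepP σ1 πX w γ γ' * B1 γ')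
              + ∑' γ', Δ.stepP σ1 πX w γ γ' * B2 γ' := by
              rw [← Summable.tsum_add hsumB1 hsumB2]
              exact tsum_congr fun γ' => by ring
          _ ≤ (⨆ m, Δ.reachN σ1 πX T m w γ) + ⨆ m, popV Δ σ1 πX T r m w γ := by
              refine add_le_add ?_ ?_
              · refine le_trans ?_ (hRstep w γ hmem)
                refine Summable.tsum_le_tsum (fun γ' => mul_le_mul_of_nonneg_left ?_
                  (stepP_nonneg Δ σ1 πX _ _ _)) hsumB1 ?_
                · rw [hB1]; dsimp only; split
                  · exact hR0 _ _
                  · exact le_refl _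
                · exact step_mul_summable Δ σ1 πX w γ (fun γ' => hR0 _ _) (fun γ' => hR1 _ _)
              · -- split B2 into the indicator and the rest
                have hind : (∑' γ', Δ.stepP σ1 πX w γ γ' *
                    (if γ' = [] then r (w ++ [γ]) else 0)) = Δ.stepP σ1 πX w γ [] * r (w ++ [γ]) := by
                  rw [tsum_eq_single ([] : List Γ) (fun γ' hne => by rw [if_neg hne, mul_zero])]
                  rw [if_pos rfl]
                have hsumind : Summable fun γ' => Δ.stepP σ1 πX w γ γ' *
                    (if γ' = [] then r (w ++ [γ]) else 0) :=
                  step_mul_summable Δ σ1 πX w γ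
                    (fun γ' => by split; · exact hr0 _
                                  · exact le_refl 0)
                    (fun γ' => by split; · exact hr1 _
                                  · norm_num)
                have hsumB2' : Summable fun γ' => Δ.stepP σ1 πX w γ γ' *
                    (if γ' = [] then 0 else ⨆ m, popV Δ σ1 πX T r m (w ++ [γ]) γ') :=
                  step_mul_summable Δ σ1 πX w γ
                    (fun γ' => by split; · exact le_refl 0
                                  · exact hP0 _ _)
                    (fun γ' => by split; · norm_num
                                  · exact hP1 _ _)
                have hB2split : (∑' γ', Δ.stepP σ1 πX w γ γ' * B2 γ')
                    = Δ.stepP σ1 πX w γ [] * r (w ++ [γ])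
                      + ∑' γ', Δ.stepP σ1 πX w γ γ' *
                        (if γ' = [] then 0 else ⨆ m, popV Δ σ1 πX T r m (w ++ [γ]) γ') := by
                  rw [← hind, ← Summable.tsum_add hsumind hsumB2']
                  refine tsum_congr fun γ' => ?_
                  rw [hB2]
                  dsimp only
                  rcases eq_or_ne γ' ([] : List Γ) with rfl | hne
                  · rw [if_pos rfl, if_pos rfl, if_pos rfl, mul_zero, add_zero]
                  · rw [if_neg hne, if_neg hne, if_neg hne, mul_zero, zero_add]
                rw [hB2split]
                refine le_trans ?_ (hPstep w γ (by tauto))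
                refine add_le_add (le_refl _) ?_
                refine Summable.tsum_le_tsum (fun γ' => mul_le_mul_of_nonneg_left ?_
                  (stepP_nonneg Δ σ1 πX _ _ _)) hsumB2' ?_
                · split
                  · exact hP0 _ _
                  · exact le_refl _
                · exact step_mul_summable Δ σ1 πX w γ (fun γ' => hP0 _ _) (fun γ' => hP1 _ _)
  -- assembling the bound
  have hfinal : ∀ n, Δ.reachN σB πC T n [] (X :: β)
      ≤ (⨆ m, Δ.reachN σ1 πX T m [] [X]) + ⨆ m, popV Δ σ1 πX T r m [] [X] := by
    intro n
    have h1 : Δ.reachN σB πC T n [] (X :: β) = Δ.reachN σB πC T n (lift β []) ([X] ++ β) := rfl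
    rw [h1]
    exact le_trans (hmain n [] [X] (by simp)) (hC1 n [] [X] (by simp))
  have htlt : (⨆ m, Δ.reachN σ1 πX T m [] [X]) < 1 := hπX σ1
  rcases eq_or_lt_of_le (hP0 [] [X]) with hP | hP
  · -- pop value vanishes
    calc Δ.reachP σB πC T (X :: β) ≤ (⨆ m, Δ.reachN σ1 πX T m [] [X])
          + ⨆ m, popV Δ σ1 πX T r m [] [X] := ciSup_le hfinal
      _ < 1 := by rw [← hP, add_zero]; exact htlt
  · -- positive pop value: find a pop path and improve strictly
    have hex : ∃ m, 0 < popV Δ σ1 πX T r m [] [X] := by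
      by_contra hall
      push_neg at hall
      have : (⨆ m, popV Δ σ1 πX T r m [] [X]) ≤ 0 := ciSup_le hall
      linarith
    obtain ⟨m₀, hm₀⟩ := hex
    obtain ⟨v, hv⟩ := popV_pos_ext σ1 πX T hr0 m₀ [] [X] hm₀
    set δ : ℝ := popP Δ σ1 πX T [] [X] v * (1 - r ([] ++ [[X]] ++ v)) with hδdef
    have hδ : 0 < δ := mul_pos hv (by linarith [hrlt (([] : List (List Γ)) ++ [[X]] ++ v)])
    have hone0 : ∀ w : List (List Γ), (0:ℝ) ≤ (fun _ => (1:ℝ)) w := fun _ => by norm_num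
    have hone1 : ∀ w : List (List Γ), (fun _ => (1:ℝ)) w ≤ 1 := fun _ => le_refl 1
    have hbdd1 : BddAbove (Set.range fun m => popV Δ σ1 πX T (fun _ => 1) m [] [X]) :=
      bddAbove_of_le_one fun m => popV_le_one σ1 πX T _ hone0 hone1 hTnil m [] [X]
    have hPle : (⨆ m, popV Δ σ1 πX T r m [] [X])
        ≤ (⨆ m, popV Δ σ1 πX T (fun _ => 1) m [] [X]) - δ := by
      refine ciSup_le fun m => ?_
      have h1 : popV Δ σ1 πX T r m [] [X] ≤ popV Δ σ1 πX T r (v.length + 1 + m) [] [X] :=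
        popV_mono_m σ1 πX T r hr0 hr1 hTnil m (v.length + 1 + m) (by omega) [] [X]
      have h2 := popV_sub σ1 πX T hr0 hr1 hTnil v m [] [X]
      have h3 : popV Δ σ1 πX T (fun _ => 1) (v.length + 1 + m) [] [X]
          ≤ ⨆ m, popV Δ σ1 πX T (fun _ => 1) m [] [X] := le_ciSup hbdd1 _
      rw [← hδdef] at h2
      linarith
    have hRP1' : (⨆ m, Δ.reachN σ1 πX T m [] [X])
        + (⨆ m, popV Δ σ1 πX T (fun _ => 1) m [] [X]) ≤ 1 := by
      rw [← ciSup_add_ciSup_of_monotone (hRmono [] [X])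
        (fun m m' hm => popV_mono_m σ1 πX T _ hone0 hone1 hTnil m m' hm [] [X])
        (fun m => reachN_le_one Δ σ1 πX T m [] [X])
        (fun m => popV_le_one σ1 πX T _ hone0 hone1 hTnil m [] [X])]
      exact ciSup_le fun m => reachN_add_popV_le_one σ1 πX T _ hone0 hone1 hTnil m [] [X]
    calc Δ.reachP σB πC T (X :: β)
        ≤ (⨆ m, Δ.reachN σ1 πX T m [] [X]) + ⨆ m, popV Δ σ1 πX T r m [] [X] :=
          ciSup_le hfinal
      _ ≤ (⨆ m, Δ.reachN σ1 πX T m [] [X])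
          + ((⨆ m, popV Δ σ1 πX T (fun _ => 1) m [] [X]) - δ) := by linarith
      _ ≤ 1 - δ := by linarith
      _ < 1 := by linarith

end BPA
namespace BPA

variable {Γ : Type*} [Fintype Γ] {Δ : BPA Γ}

/-- Case (H2): a symbol not in `A` on top of a Diamond-losing configuration is losing. -/
lemma not_mem_W_cons_of_not_A {ΓT : Set Γ} {Y : Γ}
    (hY : [Y] ∉ Δ.WDiaLtOne (topSetE ΓT)) {β : List Γ}
    (hβ : β ∉ Δ.WDiaLtOne (topLang ΓT)) :
    Y :: β ∉ Δ.WDiaLtOne (topLang ΓT) := by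
  rw [not_mem_WDiaLtOne (Δ := Δ) (T := topSetE ΓT)] at hY
  rw [not_mem_WDiaLtOne (Δ := Δ) (T := topLang ΓT)] at hβ ⊢
  intro πB
  have hTnil : ([] : List Γ) ∉ topLang ΓT := topLang_nil
  set T : Set (List Γ) := topLang ΓT with hTdef
  set π1 : Δ.Strat Δ.isDiamond := πB.pushdown β with hπ1
  obtain ⟨σ1, hσ1⟩ := hY π1
  set σ2 : List (List Γ) → Δ.Strat Δ.isBox := fun p => (hβ (πB.shift p)).choose with hσ2def
  have hσ2 : ∀ p, Δ.reachP (σ2 p) (πB.shift p) T β = 1 := fun p => (hβ (πB.shift p)).choose_spec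
  refine ⟨σ1.comp σ2 β, ?_⟩
  set σB : Δ.Strat Δ.isBox := σ1.comp σ2 β with hσB
  -- phase-2 shift
  have hshift : ∀ (w : List (List Γ)), (∀ x ∈ w, x ≠ ([] : List Γ)) → ∀ m,
      Δ.reachN σB πB T m (lift β w) β
        = Δ.reachN (σ2 (lift β w)) (πB.shift (lift β w)) T m [] β := by
    intro w hw m
    have hch : ∀ (u : List (List Γ)) (c : List Γ),
        ((u = [] ∧ c = β) ∨ (∃ rest, u = β :: rest)) →
        ∀ α, Δ.choice σB πB (lift β w ++ u) c α
          = Δ.choice (σ2 (lift β w)) (πB.shift (lift β w)) u c α := by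
      intro u c hu α
      cases c with
      | nil => rfl
      | cons Z t =>
        refine choice_congr Δ σB (σ2 (lift β w)) πB (πB.shift (lift β w))
          (fun α' => ?_) (fun α' => rfl) α
        exact comp_f_phase2 σ1 σ2 β w hw u (Z :: t) hu α'
    have h := reachN_shift Δ σB (σ2 (lift β w)) πB (πB.shift (lift β w)) T (lift β w) β hch
      m [] β (Or.inl ⟨rfl, rfl⟩)
    rwa [List.append_nil] at h
  -- terminal payoff
  set g : ℕ → List (List Γ) → ℝ :=
    fun m w => Δ.reachN (σ2 (lift β w)) (πB.shift (lift β w)) T m [] β with hgdef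
  have hg0 : ∀ m w, 0 ≤ g m w := fun m w => reachN_nonneg Δ _ _ T m [] β
  have hg1 : ∀ m w, g m w ≤ 1 := fun m w => reachN_le_one Δ _ _ T m [] β
  have hgm : ∀ w, Monotone fun m => g m w :=
    fun w m m' hm => reachN_mono_fuel Δ _ _ T m m' hm [] β
  have hgsup : ∀ w, (⨆ m, g m w) = 1 := fun w => hσ2 (lift β w)
  -- phase-1 choice correspondence
  have hch1 : ∀ (w : List (List Γ)) (γ : List Γ), (∀ x ∈ w, x ≠ ([] : List Γ)) → γ ≠ [] →
      ∀ α, Δ.choice σB πB (lift β w) (γ ++ β) α = Δ.choice σ1 π1 w γ α := by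
    intro w γ hw hγ
    cases γ with
    | nil => exact absurd rfl hγ
    | cons Z t =>
      intro α
      refine choice_congr Δ σB σ1 πB π1 (fun α' => ?_) (fun α' => rfl) α
      exact comp_f_phase1 σ1 σ2 β w (Z :: t) hw (List.cons_ne_nil Z t) α'
  -- main lower bound
  have hmain : ∀ (n m : ℕ) (w : List (List Γ)) (γ : List Γ), (∀ x ∈ w, x ≠ ([] : List Γ)) →
      hitQ Δ σ1 π1 T g m n w γ ≤ Δ.reachN σB πB T (n + m) (lift β w) (γ ++ β) := by
    intro n
    induction n with
    | zero =>
      intro m w γ hw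
      by_cases hγ : γ = []
      · subst hγ
        rw [hitQ_nil, List.nil_append, Nat.zero_add, hshift w hw m]
      · by_cases hmem : γ ∈ T
        · rw [hitQ_of_mem σ1 π1 T g hγ hmem,
            reachN_of_mem Δ σB πB T ((topLang_append hγ β).mpr hmem) _ _]
        · rw [hitQ_zero_of σ1 π1 T g hγ hmem]
          exact reachN_nonneg Δ σB πB T _ _ _
    | succ n ih =>
      intro m w γ hw
      by_cases hγ : γ = []
      · subst hγ
        rw [hitQ_nil, List.nil_append]
        calc g m w = Δ.reachN σB πB T m (lift β w) β := (hshift w hw m).symm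
          _ ≤ Δ.reachN σB πB T (n + 1 + m) (lift β w) β :=
            reachN_mono_fuel Δ σB πB T m (n+1+m) (by omega) _ _
      · by_cases hmem : γ ∈ T
        · rw [hitQ_of_mem σ1 π1 T g hγ hmem,
            reachN_of_mem Δ σB πB T ((topLang_append hγ β).mpr hmem) _ _]
        · have hmem' : γ ++ β ∉ T := fun h => hmem ((topLang_append hγ β).mp h)
          rw [show n + 1 + m = (n + m) + 1 by omega]
          rw [hitQ_succ_of σ1 π1 T g hγ hmem,
            reachN_succ_of_not_mem Δ σB πB T hmem' _ _,
            step_reindex Δ σB σ1 πB π1 hγ (hch1 w γ hw hγ)]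
          have hw' : ∀ x ∈ w ++ [γ], x ≠ ([] : List Γ) := by
            intro x hx
            rcases List.mem_append.mp hx with h | h
            · exact hw x h
            · rw [List.mem_singleton.mp h]; exact hγ
          refine Summable.tsum_le_tsum (fun γ' => ?_) ?_ ?_
          · have h := ih m (w ++ [γ]) γ' hw'
            rw [lift_append] at h
            exact mul_le_mul_of_nonneg_left h (stepP_nonneg Δ σ1 π1 w γ γ')
          · exact step_mul_summable Δ σ1 π1 w γ
              (fun γ' => hitQ_nonneg σ1 π1 T g hg0 n m _ γ')
              (fun γ' => hitQ_le_one σ1 π1 T g hg0 hg1 n m _ γ')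
          · exact step_mul_summable Δ σ1 π1 w γ
              (fun γ' => reachN_nonneg Δ σB πB T _ _ _)
              (fun γ' => reachN_le_one Δ σB πB T _ _ _)
  -- monotone convergence: the supremum over the payoff horizon
  have hconv : ∀ (n : ℕ) (w : List (List Γ)) (γ : List Γ),
      (⨆ m, hitQ Δ σ1 π1 T g m n w γ) = Δ.reachN σ1 π1 (topSetE ΓT) n w γ := by
    intro n
    induction n with
    | zero =>
      intro w γ
      by_cases hγ : γ = []
      · subst hγ
        rw [reachN_of_mem Δ σ1 π1 _ (mem_topSetE.mpr (Or.inr rfl)) 0 w]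
        have : ∀ m, hitQ Δ σ1 π1 T g m 0 w ([] : List Γ) = g m w :=
          fun m => hitQ_nil σ1 π1 T g m 0 w
        simp only [this]
        exact hgsup w
      · by_cases hmem : γ ∈ T
        · rw [reachN_of_mem Δ σ1 π1 _ (mem_topSetE.mpr (Or.inl hmem)) 0 w]
          have : ∀ m, hitQ Δ σ1 π1 T g m 0 w γ = 1 :=
            fun m => hitQ_of_mem σ1 π1 T g hγ hmem m 0 w
          simp only [this]
          exact ciSup_const
        · have hne : γ ∉ topSetE ΓT := by
            rw [mem_topSetE]
            rintro (h | h)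
            · exact hmem h
            · exact hγ h
          rw [reachN_zero_of_not_mem Δ σ1 π1 _ hne w]
          have : ∀ m, hitQ Δ σ1 π1 T g m 0 w γ = 0 :=
            fun m => hitQ_zero_of σ1 π1 T g hγ hmem m w
          simp only [this]
          exact ciSup_const
    | succ n ih =>
      intro w γ
      by_cases hγ : γ = []
      · subst hγ
        rw [reachN_of_mem Δ σ1 π1 _ (mem_topSetE.mpr (Or.inr rfl)) (n+1) w]
        have : ∀ m, hitQ Δ σ1 π1 T g m (n+1) w ([] : List Γ) = g m w :=
          fun m => hitQ_nil σ1 π1 T g m (n+1) w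
        simp only [this]
        exact hgsup w
      · by_cases hmem : γ ∈ T
        · rw [reachN_of_mem Δ σ1 π1 _ (mem_topSetE.mpr (Or.inl hmem)) (n+1) w]
          have : ∀ m, hitQ Δ σ1 π1 T g m (n+1) w γ = 1 :=
            fun m => hitQ_of_mem σ1 π1 T g hγ hmem m (n+1) w
          simp only [this]
          exact ciSup_const
        · have hne : γ ∉ topSetE ΓT := by
            rw [mem_topSetE]
            rintro (h | h)
            · exact hmem h
            · exact hγ h
          rw [reachN_succ_of_not_mem Δ σ1 π1 _ hne n w]
          have heq : ∀ m, hitQ Δ σ1 π1 T g m (n+1) w γ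
              = ∑' γ', Δ.stepP σ1 π1 w γ γ' * hitQ Δ σ1 π1 T g m n (w ++ [γ]) γ' :=
            fun m => hitQ_succ_of σ1 π1 T g hγ hmem m n w
          simp only [heq]
          rw [← tsum_mul_iSup_eq (fun m γ' => hitQ Δ σ1 π1 T g m n (w ++ [γ]) γ')
            (fun γ' => stepP_nonneg Δ σ1 π1 w γ γ') (stepP_summable Δ σ1 π1 w γ)
            (fun m γ' => hitQ_nonneg σ1 π1 T g hg0 n m _ γ')
            (fun m γ' => hitQ_le_one σ1 π1 T g hg0 hg1 n m _ γ')
            (fun γ' m m' hm => hitQ_mono_m σ1 π1 T g hg0 hg1 hgm n m m' hm _ γ')]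
          exact tsum_congr fun γ' => by rw [ih (w ++ [γ]) γ']
  -- conclude
  have hub : ∀ n, Δ.reachN σ1 π1 (topSetE ΓT) n [] [Y] ≤ Δ.reachP σB πB T (Y :: β) := by
    intro n
    rw [← hconv n [] [Y]]
    refine ciSup_le fun m => ?_
    have h := hmain n m [] [Y] (by simp)
    have h2 : Δ.reachN σB πB T (n+m) (lift β []) ([Y] ++ β)
        = Δ.reachN σB πB T (n+m) [] (Y :: β) := rfl
    rw [h2] at h
    exact le_trans h (reachN_le_reachP Δ σB πB T (n+m) (Y :: β))
  have h1 : (1 : ℝ) ≤ Δ.reachP σB πB T (Y :: β) := by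
    rw [← hσ1]
    exact ciSup_le hub
  exact le_antisymm (reachP_le_one Δ σB πB T _) h1

end BPA
section LangFacts

variable {Γ : Type*} [Fintype Γ]

omit [Fintype Γ] in
lemma mem_kstar_symLang {C : Set Γ} {c : List Γ} :
    c ∈ KStar.kstar (symLang C) ↔ ∀ X ∈ c, X ∈ C := by
  constructor
  · rw [Language.mem_kstar]
    rintro ⟨L, rfl, hL⟩
    intro X hX
    rcases List.mem_flatten.mp hX with ⟨y, hy, hXy⟩
    rcases hL y hy with ⟨Z, hZ, rfl⟩
    rcases List.mem_singleton.mp hXy with rfl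
    exact hZ
  · intro h
    rw [Language.mem_kstar]
    refine ⟨c.map (fun X => [X]), ?_, ?_⟩
    · induction c with
      | nil => rfl
      | cons X t iht =>
        simp only [List.map_cons, List.flatten_cons]
        rw [← iht (fun Z hZ => h Z (List.mem_cons_of_mem X hZ))]
        rfl
    · intro y hy
      rcases List.mem_map.mp hy with ⟨Z, hZ, rfl⟩
      exact ⟨Z, h Z hZ, rfl⟩

end LangFacts
/-- `W_Diamond(T,<1) = C* A Γ* ∪ C*` where `A = W_Diamond(T_ε,<1) ∩ Γ` and
`C = W_Diamond(T,<1) ∩ Γ`. -/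
theorem WDiaLtOne_eq {Γ : Type*} [Fintype Γ] (Δ : BPA Γ) (ΓT : Set Γ)
    (hT : ∀ R ∈ ΓT, ∀ α, Δ.rule R α ↔ α = [R])
    (A C : Set Γ)
    (hA : A = {X | [X] ∈ Δ.WDiaLtOne (topLang ΓT ∪ {([] : List Γ)})})
    (hC : C = {X | [X] ∈ Δ.WDiaLtOne (topLang ΓT)}) :
    (Δ.WDiaLtOne (topLang ΓT) : Language Γ)
        = KStar.kstar (symLang C) * symLang A * (⊤ : Language Γ)
            + KStar.kstar (symLang C) := by
  have hTE : (topLang ΓT ∪ {([] : List Γ)} : Set (List Γ)) = BPA.topSetE ΓT := rfl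
  have hAmem : ∀ X : Γ, X ∈ A ↔ [X] ∈ Δ.WDiaLtOne (BPA.topSetE ΓT) := by
    intro X
    rw [hA]
    rw [Set.mem_setOf_eq, hTE]
  have hCmem : ∀ X : Γ, X ∈ C ↔ [X] ∈ Δ.WDiaLtOne (topLang ΓT) := by
    intro X
    rw [hC, Set.mem_setOf_eq]
  -- appending a list of C-symbols preserves membership in the winning region
  have hext : ∀ (u : List Γ), (∀ X ∈ u, X ∈ C) → ∀ v ∈ Δ.WDiaLtOne (topLang ΓT),
      u ++ v ∈ Δ.WDiaLtOne (topLang ΓT) := by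
    intro u
    induction u with
    | nil => intro _ v hv; exact hv
    | cons X t ih =>
      intro hu v hv
      have h1 : t ++ v ∈ Δ.WDiaLtOne (topLang ΓT) :=
        ih (fun Z hZ => hu Z (List.mem_cons_of_mem X hZ)) v hv
      exact BPA.mem_W_cons_of_C ((hCmem X).mp (hu X List.mem_cons_self)) h1
  apply Set.eq_of_subset_of_subset
  · -- forward inclusion
    intro c
    induction c with
    | nil =>
      intro _
      apply (Language.mem_add _ _ _).mpr
      right
      exact mem_kstar_symLang.mpr (fun X hX => absurd hX List.not_mem_nil)
    | cons X t ih =>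
      intro hc
      by_cases hXA : X ∈ A
      · apply (Language.mem_add _ _ _).mpr
        left
        rw [Language.mem_mul]
        refine ⟨[X], ?_, t, trivial, rfl⟩
        rw [Language.mem_mul]
        refine ⟨[], mem_kstar_symLang.mpr (fun Z hZ => absurd hZ List.not_mem_nil),
          [X], ⟨X, hXA, rfl⟩, rfl⟩
      · by_cases hXC : X ∈ C
        · have ht : t ∈ Δ.WDiaLtOne (topLang ΓT) := by
            by_contra htn
            exact (BPA.not_mem_W_cons_of_not_A
              (fun h => hXA ((hAmem X).mpr h)) htn) hc
          rcases (Language.mem_add _ _ _).mp (ih ht) with h1 | h1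
          · apply (Language.mem_add _ _ _).mpr
            left
            rw [Language.mem_mul] at h1 ⊢
            obtain ⟨ua, hua, rest, hrest, hsplit⟩ := h1
            rw [Language.mem_mul] at hua
            obtain ⟨u, hu, a, ha, hsplit2⟩ := hua
            refine ⟨X :: ua, ?_, rest, hrest, by rw [← hsplit]; rfl⟩
            rw [Language.mem_mul]
            refine ⟨X :: u, ?_, a, ha, by rw [← hsplit2]; rfl⟩
            rw [mem_kstar_symLang] at hu ⊢
            intro Z hZ
            rcases List.mem_cons.mp hZ with rfl | hZ'
            · exact hXC
            · exact hu Z hZ'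
          · apply (Language.mem_add _ _ _).mpr
            right
            rw [mem_kstar_symLang] at h1 ⊢
            intro Z hZ
            rcases List.mem_cons.mp hZ with rfl | hZ'
            · exact hXC
            · exact h1 Z hZ'
        · exact absurd hc (BPA.not_mem_W_cons_of_not_C (fun h => hXC ((hCmem X).mpr h)) t)
  · -- backward inclusion
    intro c hc
    rcases (Language.mem_add _ _ _).mp hc with h1 | h1
    · rw [Language.mem_mul] at h1
      obtain ⟨ua, hua, rest, -, hsplit⟩ := h1
      rw [Language.mem_mul] at hua
      obtain ⟨u, hu, a, ha, hsplit2⟩ := hua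
      obtain ⟨Z, hZ, rfl⟩ := ha
      have h2 : Z :: rest ∈ Δ.WDiaLtOne (topLang ΓT) :=
        BPA.mem_W_cons_of_A ((hAmem Z).mp hZ) rest
      have h3 : u ++ (Z :: rest) ∈ Δ.WDiaLtOne (topLang ΓT) :=
        hext u (mem_kstar_symLang.mp hu) _ h2
      have h4 : u ++ (Z :: rest) = c := by
        rw [← hsplit, ← hsplit2]
        simp
      rwa [h4] at h3
    · have h2 : c ++ ([] : List Γ) ∈ Δ.WDiaLtOne (topLang ΓT) :=
        hext c (mem_kstar_symLang.mp h1) [] (BPA.nil_mem_WDiaLtOne BPA.topLang_nil)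
      rwa [List.append_nil] at h2
end

section
/- In the doubled BPA game \bar{Δ} (where each symbol X has a twin X' such that twins follow the same rules except that X' → ε rules are replaced by self-loops X' → X', and rules X → YZ give X' → YZ'), if X ∈ W_Diamond(T_ε,<1) then X' ∈ W_Diamond(T,<1). -/
open scoped Classical

variable {Γ : Type*} [Fintype Γ]

/-- `Δ` is in special normal form with respect to the set `ΓT` of target
symbols. -/
def BPA.SNF (Δ : BPA Γ) (ΓT : Set Γ) : Prop :=
  (∀ R ∈ ΓT, Δ.isCirc R ∧ ∀ α, Δ.rule R α ↔ α = [R]) ∧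
  (∀ X α, (Δ.isDiamond X ∨ Δ.isCirc X) → Δ.rule X α → α.length = 1) ∧
  (∀ X, Δ.isBox X →
    ((∀ α, Δ.rule X α → α.length = 1) ∨
     (∀ α, Δ.rule X α ↔ α = ([] : List Γ)) ∨
     (∃ Y Z, ∀ α, Δ.rule X α ↔ α = [Y, Z])))

/-- `Δb` over `Γ ⊕ Γ` is the doubled game of `Δ`: `Sum.inl X` plays the role
of `X` and `Sum.inr X` the role of its twin `X'`, with the rules `X' → X'`
replacing `X → ε`, `X' → Y'` replacing `X → Y`, and `X' → Y Z'` replacing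
`X → YZ`; ownership and probabilities are inherited. -/
def IsDoubling (Δb : BPA (Γ ⊕ Γ)) (Δ : BPA Γ) : Prop :=
  (∀ X : Γ,
    (Δb.isBox (Sum.inl X) ↔ Δ.isBox X) ∧ (Δb.isDiamond (Sum.inl X) ↔ Δ.isDiamond X) ∧
    (Δb.isCirc (Sum.inl X) ↔ Δ.isCirc X) ∧
    (Δb.isBox (Sum.inr X) ↔ Δ.isBox X) ∧ (Δb.isDiamond (Sum.inr X) ↔ Δ.isDiamond X) ∧
    (Δb.isCirc (Sum.inr X) ↔ Δ.isCirc X)) ∧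
  (∀ (X : Γ) (α : List (Γ ⊕ Γ)),
    Δb.rule (Sum.inl X) α ↔ ∃ α₀, Δ.rule X α₀ ∧ α = α₀.map Sum.inl) ∧
  (∀ (X : Γ) (α : List (Γ ⊕ Γ)),
    Δb.rule (Sum.inr X) α ↔ ∃ α₀, Δ.rule X α₀ ∧
      ((α₀ = [] ∧ α = [Sum.inr X]) ∨
       (∃ Y, α₀ = [Y] ∧ α = [Sum.inr Y]) ∨
       (∃ Y Z, α₀ = [Y, Z] ∧ α = [Sum.inl Y, Sum.inr Z]))) ∧
  (∀ X Y : Γ, Δ.isCirc X →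
    Δb.prob (Sum.inl X) [Sum.inl Y] = Δ.prob X [Y] ∧
    Δb.prob (Sum.inr X) [Sum.inr Y] = Δ.prob X [Y])

/-- The target set of the doubled game: configurations whose top symbol is a
target symbol or the twin of a target symbol. -/
def doubledTarget (ΓT : Set Γ) : Set (List (Γ ⊕ Γ)) :=
  {c | ∃ s β, c = s :: β ∧ ((∃ R ∈ ΓT, s = Sum.inl R) ∨ ∃ R ∈ ΓT, s = Sum.inr R)}

set_option linter.unusedSectionVars false
/-! ### Generic lemmas about `choice`, `stepP`, `reachN` -/

section Generic

variable {A : Type*} [Fintype A] (Δa : BPA A) (σ : Δa.Strat Δa.isBox)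
  (π : Δa.Strat Δa.isDiamond)

lemma BPA.choice_cons_s17 (w : List (List A)) (X : A) (β α : List A) :
    Δa.choice σ π w (X :: β) α =
      if Δa.isBox X then σ.f w (X :: β) α else if Δa.isDiamond X then π.f w (X :: β) α
      else Δa.prob X α := rfl

lemma BPA.choice_nonneg_s17 (w : List (List A)) (c α : List A) :
    0 ≤ Δa.choice σ π w c α := by
  cases c with
  | nil => exact le_refl 0
  | cons X β =>
    rw [BPA.choice_cons_s17]
    split_ifs
    · exact σ.nonneg _ _ _
    · exact π.nonneg _ _ _
    · exact Δa.prob_nonneg _ _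

lemma BPA.choice_suppRule {w : List (List A)} {X : A} {β α : List A}
    (h : Δa.choice σ π w (X :: β) α ≠ 0) : Δa.rule X α := by
  rw [BPA.choice_cons_s17] at h
  split_ifs at h with h1 h2
  · exact σ.supp _ _ _ _ h1 h
  · exact π.supp _ _ _ _ h2 h
  · have hc : Δa.isCirc X := ((Δa.cover X).resolve_left h1).resolve_left h2
    exact (Δa.prob_supp X α hc).mp (lt_of_le_of_ne (Δa.prob_nonneg X α) (Ne.symm h))

lemma BPA.choice_tsum_one_s17 (w : List (List A)) (X : A) (β : List A) :
    ∑' α, Δa.choice σ π w (X :: β) α = 1 := by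
  by_cases h1 : Δa.isBox X
  · simp only [BPA.choice_cons_s17, if_pos h1]; exact σ.sum_one w X β h1
  · by_cases h2 : Δa.isDiamond X
    · simp only [BPA.choice_cons_s17, if_neg h1, if_pos h2]; exact π.sum_one w X β h2
    · have hc : Δa.isCirc X := ((Δa.cover X).resolve_left h1).resolve_left h2
      simp only [BPA.choice_cons_s17, if_neg h1, if_neg h2]; exact Δa.prob_sum X hc

lemma BPA.choice_summable_s17 (w : List (List A)) (X : A) (β : List A) :
    Summable (Δa.choice σ π w (X :: β)) := by
  by_contra h
  have h1 := Δa.choice_tsum_one_s17 σ π w X β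
  rw [tsum_eq_zero_of_not_summable h] at h1
  exact zero_ne_one h1

lemma BPA.stepP_nonneg_s17 (w : List (List A)) (c c' : List A) :
    0 ≤ Δa.stepP σ π w c c' := by
  cases c with
  | nil =>
    show (0:ℝ) ≤ if c' = [] then 1 else 0
    split_ifs <;> norm_num
  | cons X β =>
    refine tsum_nonneg fun α => ?_
    split_ifs
    · exact Δa.choice_nonneg_s17 σ π _ _ _
    · exact le_refl 0

lemma BPA.stepP_cons_apply (w : List (List A)) (X : A) (β α : List A) :
    Δa.stepP σ π w (X :: β) (α ++ β) =
      if Δa.rule X α then Δa.choice σ π w (X :: β) α else 0 := by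
  show (∑' α₂ : List A, if α₂ ++ β = α ++ β ∧ Δa.rule X α₂
      then Δa.choice σ π w (X :: β) α₂ else 0) = _
  rw [tsum_eq_single α]
  · simp only [eq_self_iff_true, true_and]
  · intro b hb
    rw [if_neg]
    rintro ⟨hb2, -⟩
    exact hb (List.append_left_injective β hb2)

lemma BPA.tsum_stepP_mul (w : List (List A)) (X : A) (β : List A) (F : List A → ℝ) :
    ∑' c', Δa.stepP σ π w (X :: β) c' * F c' =
      ∑' α, if Δa.rule X α then Δa.choice σ π w (X :: β) α * F (α ++ β) else 0 := by
  apply tsum_eq_tsum_of_ne_zero_bij (i := fun a => (a : List A) ++ β)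
  · intro x y hxy
    exact Subtype.ext (List.append_left_injective β hxy)
  · rintro c' hc'
    have hstep : Δa.stepP σ π w (X :: β) c' ≠ 0 := fun h0 => hc' (by
      show Δa.stepP σ π w (X :: β) c' * F c' = 0
      rw [h0, zero_mul])
    have hF : F c' ≠ 0 := fun h0 => hc' (by
      show Δa.stepP σ π w (X :: β) c' * F c' = 0
      rw [h0, mul_zero])
    have hex : ∃ α, (if α ++ β = c' ∧ Δa.rule X α
        then Δa.choice σ π w (X :: β) α else 0) ≠ 0 := by
      by_contra hall
      push_neg at hall
      apply hstep
      show (∑' α₂ : List A, if α₂ ++ β = c' ∧ Δa.rule X α₂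
          then Δa.choice σ π w (X :: β) α₂ else 0) = 0
      simp only [hall, tsum_zero]
    obtain ⟨α, hα⟩ := hex
    have hcond : α ++ β = c' ∧ Δa.rule X α := by
      by_contra hc; rw [if_neg hc] at hα; exact hα rfl
    obtain ⟨hc, hr⟩ := hcond
    subst hc
    have hchoice : Δa.choice σ π w (X :: β) α ≠ 0 := by
      rw [if_pos ⟨rfl, hr⟩] at hα; exact hα
    refine ⟨⟨α, Function.mem_support.mpr ?_⟩, rfl⟩
    show (if Δa.rule X α then Δa.choice σ π w (X :: β) α * F (α ++ β) else 0) ≠ 0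
    rw [if_pos hr]
    exact mul_ne_zero hchoice hF
  · rintro ⟨α, hα⟩
    have hr : Δa.rule X α := by
      by_contra hr
      apply hα
      show (if Δa.rule X α then Δa.choice σ π w (X :: β) α * F (α ++ β) else 0) = 0
      rw [if_neg hr]
    show Δa.stepP σ π w (X :: β) (α ++ β) * F (α ++ β) = _
    rw [Δa.stepP_cons_apply σ π w X β, if_pos hr, if_pos hr]

lemma BPA.tsum_stepP_one (w : List (List A)) (c : List A) :
    ∑' c', Δa.stepP σ π w c c' = 1 := by
  cases c with
  | nil =>
    show (∑' c' : List A, if c' = [] then (1:ℝ) else 0) = 1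
    exact tsum_ite_eq ([] : List A) 1
  | cons X β =>
    have h := Δa.tsum_stepP_mul σ π w X β (fun _ => 1)
    simp only [mul_one] at h
    rw [h]
    have : ∀ α, (if Δa.rule X α then Δa.choice σ π w (X :: β) α else 0)
        = Δa.choice σ π w (X :: β) α := by
      intro α
      split_ifs with hr
      · rfl
      · by_contra hne
        exact hr (Δa.choice_suppRule σ π fun h => hne h.symm)
    simp only [this]
    exact Δa.choice_tsum_one_s17 σ π w X β

lemma BPA.stepP_summable_s17 (w : List (List A)) (c : List A) :
    Summable (Δa.stepP σ π w c) := by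
  by_contra h
  have h1 := Δa.tsum_stepP_one σ π w c
  rw [tsum_eq_zero_of_not_summable h] at h1
  exact zero_ne_one h1

lemma BPA.reachN_nonneg_s17 (T : Set (List A)) :
    ∀ (n : ℕ) (w : List (List A)) (c : List A), 0 ≤ Δa.reachN σ π T n w c := by
  intro n
  induction n with
  | zero =>
    intro w c
    show (0:ℝ) ≤ if c ∈ T then 1 else 0
    split_ifs <;> norm_num
  | succ n ih =>
    intro w c
    show (0:ℝ) ≤ if c ∈ T then 1 else
      ∑' c', Δa.stepP σ π w c c' * Δa.reachN σ π T n (w ++ [c]) c'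
    split_ifs
    · norm_num
    · exact tsum_nonneg fun c' => mul_nonneg (Δa.stepP_nonneg_s17 σ π _ _ _) (ih _ _)

lemma BPA.reachN_le_one_s17 (T : Set (List A)) :
    ∀ (n : ℕ) (w : List (List A)) (c : List A), Δa.reachN σ π T n w c ≤ 1 := by
  intro n
  induction n with
  | zero =>
    intro w c
    show (if c ∈ T then (1:ℝ) else 0) ≤ 1
    split_ifs <;> norm_num
  | succ n ih =>
    intro w c
    show (if c ∈ T then (1:ℝ) else
      ∑' c', Δa.stepP σ π w c c' * Δa.reachN σ π T n (w ++ [c]) c') ≤ 1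
    split_ifs
    · norm_num
    · calc ∑' c', Δa.stepP σ π w c c' * Δa.reachN σ π T n (w ++ [c]) c'
          ≤ ∑' c', Δa.stepP σ π w c c' := by
            refine Summable.tsum_le_tsum (fun c' => mul_le_of_le_one_right
              (Δa.stepP_nonneg_s17 σ π _ _ _) (ih _ _)) ?_ (Δa.stepP_summable_s17 σ π w c)
            exact (Δa.stepP_summable_s17 σ π w c).of_nonneg_of_le
              (fun c' => mul_nonneg (Δa.stepP_nonneg_s17 σ π _ _ _)
                (Δa.reachN_nonneg_s17 σ π T _ _ _))
              (fun c' => mul_le_of_le_one_right (Δa.stepP_nonneg_s17 σ π _ _ _) (ih _ _))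
      _ = 1 := Δa.tsum_stepP_one σ π w c

lemma BPA.reachN_zero_s17 (T : Set (List A)) (w : List (List A)) (c : List A) :
    Δa.reachN σ π T 0 w c = if c ∈ T then 1 else 0 := rfl

lemma BPA.reachN_of_mem_s17 (T : Set (List A)) (n : ℕ) (w : List (List A)) {c : List A}
    (h : c ∈ T) : Δa.reachN σ π T n w c = 1 := by
  cases n with
  | zero => show (if c ∈ T then (1:ℝ) else 0) = 1; rw [if_pos h]
  | succ n =>
    show (if c ∈ T then (1:ℝ) else _) = 1
    rw [if_pos h]

lemma BPA.reachN_succ_of_not_mem_s17 (T : Set (List A)) (n : ℕ) (w : List (List A))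
    {c : List A} (h : c ∉ T) :
    Δa.reachN σ π T (n + 1) w c =
      ∑' c', Δa.stepP σ π w c c' * Δa.reachN σ π T n (w ++ [c]) c' := by
  show (if c ∈ T then (1:ℝ) else _) = _
  rw [if_neg h]

end Generic
set_option linter.unusedSectionVars false
/-! ### The priming/unpriming maps and configurations -/

section DoublingDefs

variable {Γ : Type*} [Fintype Γ]

/-- Prime a symbol. -/
def prS : Γ ⊕ Γ → Γ ⊕ Γ := Sum.elim Sum.inr Sum.inr

/-- Unprime a symbol. -/
def unS : Γ ⊕ Γ → Γ ⊕ Γ := Sum.elim Sum.inl Sum.inl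

/-- Prime the last symbol of a configuration. -/
def psiC : List (Γ ⊕ Γ) → List (Γ ⊕ Γ)
  | [] => []
  | [a] => [prS a]
  | a :: b :: t => a :: psiC (b :: t)

/-- Unprime all symbols of a configuration. -/
def phiC (c : List (Γ ⊕ Γ)) : List (Γ ⊕ Γ) := c.map unS

@[simp] lemma prS_inl (x : Γ) : prS (Sum.inl x) = Sum.inr x := rfl
@[simp] lemma prS_inr (x : Γ) : prS (Sum.inr x) = Sum.inr x := rfl
@[simp] lemma unS_inl (x : Γ) : unS (Sum.inl x) = Sum.inl x := rfl
@[simp] lemma unS_inr (x : Γ) : unS (Sum.inr x) = Sum.inl x := rfl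

@[simp] lemma psiC_append_single (l : List (Γ ⊕ Γ)) (a : Γ ⊕ Γ) :
    psiC (l ++ [a]) = l ++ [prS a] := by
  induction l with
  | nil => rfl
  | cons x t ih =>
    cases t with
    | nil => rfl
    | cons y s => simpa [psiC] using ih

lemma psiC_cons_cons (a b : Γ ⊕ Γ) (t : List (Γ ⊕ Γ)) :
    psiC (a :: b :: t) = a :: psiC (b :: t) := rfl

@[simp] lemma map_unS_map_inl (l : List Γ) :
    (l.map Sum.inl).map (unS (Γ := Γ)) = l.map Sum.inl := by
  simp [List.map_map, Function.comp_def]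

/-- The unprimed configuration `γ Z`. -/
def cfgL (γ : List Γ) (Z : Γ) : List (Γ ⊕ Γ) := γ.map Sum.inl ++ [Sum.inl Z]

/-- The configuration `γ Z'` with primed bottom symbol. -/
def cfgR (γ : List Γ) (Z : Γ) : List (Γ ⊕ Γ) := γ.map Sum.inl ++ [Sum.inr Z]

@[simp] lemma cfgL_nil (Z : Γ) : cfgL [] Z = [Sum.inl Z] := rfl
@[simp] lemma cfgR_nil (Z : Γ) : cfgR [] Z = [Sum.inr Z] := rfl
lemma cfgL_cons (W : Γ) (γ : List Γ) (Z : Γ) :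
    cfgL (W :: γ) Z = Sum.inl W :: cfgL γ Z := rfl
lemma cfgR_cons (W : Γ) (γ : List Γ) (Z : Γ) :
    cfgR (W :: γ) Z = Sum.inl W :: cfgR γ Z := rfl

@[simp] lemma cfgL_ne_nil (γ : List Γ) (Z : Γ) : cfgL γ Z ≠ [] := by
  simp [cfgL]

@[simp] lemma psiC_cfgL (γ : List Γ) (Z : Γ) : psiC (cfgL γ Z) = cfgR γ Z := by
  simp [cfgL, cfgR]

@[simp] lemma phiC_cfgR (γ : List Γ) (Z : Γ) : phiC (cfgR γ Z) = cfgL γ Z := by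
  simp [cfgR, cfgL, phiC]

/-- The rule transport on the bottom (primed) symbol. -/
noncomputable def trM (s : Γ ⊕ Γ) (α : List (Γ ⊕ Γ)) : List (Γ ⊕ Γ) :=
  if α = [] then [prS s] else psiC α

/-- The rule transport for a configuration. -/
noncomputable def trR (c α : List (Γ ⊕ Γ)) : List (Γ ⊕ Γ) :=
  match c with
  | [] => α
  | s :: β => if β = [] then trM s α else α

lemma trR_cons (s : Γ ⊕ Γ) (β α : List (Γ ⊕ Γ)) :
    trR (s :: β) α = if β = [] then trM s α else α := rfl

@[simp] lemma trM_nil (s : Γ ⊕ Γ) : trM s [] = [prS s] := rfl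
@[simp] lemma trM_single (s a : Γ ⊕ Γ) : trM s [a] = [prS a] := by simp [trM, psiC]
@[simp] lemma trM_pair (s a b : Γ ⊕ Γ) : trM s [a, b] = [a, prS b] := by
  simp [trM, psiC]

end DoublingDefs

/-! ### Rule-transport lemmas -/

section RuleLemmas

variable {Γ : Type*} [Fintype Γ] {Δ : BPA Γ} {ΓT : Set Γ} {Δb : BPA (Γ ⊕ Γ)}

/-- Decompose a rule of `Δ` according to its length. -/
lemma rule_cases (hα : Δ.rule X α₀) :
    α₀ = [] ∨ (∃ Y, α₀ = [Y]) ∨ ∃ Y W, α₀ = [Y, W] := by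
  have := Δ.rule_len X α₀ hα
  match α₀ with
  | [] => exact Or.inl rfl
  | [Y] => exact Or.inr (Or.inl ⟨Y, rfl⟩)
  | [Y, W] => exact Or.inr (Or.inr ⟨Y, W, rfl⟩)
  | _ :: _ :: _ :: _ => simp at this

lemma not_rule_nil_and_self (hSNF : Δ.SNF ΓT) (X : Γ) :
    ¬ (Δ.rule X [] ∧ Δ.rule X [X]) := by
  rintro ⟨h0, h1⟩
  rcases Δ.cover X with hB | hDC
  · rcases hSNF.2.2 X hB with h | h | ⟨Y, Z, h⟩
    · simpa using h [] h0
    · simpa using (h [X]).mp h1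
    · simpa using (h []).mp h0
  · have := hSNF.2.1 X [] hDC h0
    simp at this

lemma trM_maps (hDb : IsDoubling Δb Δ) (X : Γ) (α : List (Γ ⊕ Γ))
    (h : Δb.rule (Sum.inl X) α) : Δb.rule (Sum.inr X) (trM (Sum.inl X) α) := by
  obtain ⟨α₀, hr, rfl⟩ := (hDb.2.1 X α).mp h
  refine (hDb.2.2.1 X _).mpr ⟨α₀, hr, ?_⟩
  rcases rule_cases hr with rfl | ⟨Y, rfl⟩ | ⟨Y, W, rfl⟩
  · exact Or.inl ⟨rfl, by simp⟩
  · exact Or.inr (Or.inl ⟨Y, rfl, by simp⟩)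
  · exact Or.inr (Or.inr ⟨Y, W, rfl, by simp⟩)

lemma trM_inj (hSNF : Δ.SNF ΓT) (hDb : IsDoubling Δb Δ) (X : Γ)
    {α₁ α₂ : List (Γ ⊕ Γ)} (h₁ : Δb.rule (Sum.inl X) α₁) (h₂ : Δb.rule (Sum.inl X) α₂)
    (he : trM (Sum.inl X) α₁ = trM (Sum.inl X) α₂) : α₁ = α₂ := by
  obtain ⟨β₁, hr₁, rfl⟩ := (hDb.2.1 X α₁).mp h₁
  obtain ⟨β₂, hr₂, rfl⟩ := (hDb.2.1 X α₂).mp h₂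
  rcases rule_cases hr₁ with rfl | ⟨Y, rfl⟩ | ⟨Y, W, rfl⟩ <;>
    rcases rule_cases hr₂ with rfl | ⟨Y', rfl⟩ | ⟨Y', W', rfl⟩ <;>
    simp_all
  all_goals exact absurd ⟨by assumption, by assumption⟩ (not_rule_nil_and_self hSNF _)

lemma trM_surj (hDb : IsDoubling Δb Δ) (X : Γ) {α' : List (Γ ⊕ Γ)}
    (h : Δb.rule (Sum.inr X) α') :
    ∃ α, Δb.rule (Sum.inl X) α ∧ trM (Sum.inl X) α = α' := by
  obtain ⟨α₀, hr, hc⟩ := (hDb.2.2.1 X α').mp h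
  rcases hc with ⟨rfl, rfl⟩ | ⟨Y, rfl, rfl⟩ | ⟨Y, W, rfl, rfl⟩
  · exact ⟨[], (hDb.2.1 X _).mpr ⟨[], hr, rfl⟩, by simp⟩
  · exact ⟨[Sum.inl Y], (hDb.2.1 X _).mpr ⟨[Y], hr, rfl⟩, by simp⟩
  · exact ⟨[Sum.inl Y, Sum.inl W], (hDb.2.1 X _).mpr ⟨[Y, W], hr, rfl⟩, by simp⟩

lemma trM_inr_id (hDb : IsDoubling Δb Δ) (X : Γ) {α' : List (Γ ⊕ Γ)}
    (h : Δb.rule (Sum.inr X) α') : trM (Sum.inr X) α' = α' := by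
  obtain ⟨α₀, hr, hc⟩ := (hDb.2.2.1 X α').mp h
  rcases hc with ⟨rfl, rfl⟩ | ⟨Y, rfl, rfl⟩ | ⟨Y, W, rfl, rfl⟩ <;> simp

/-- Rules at a primed Diamond or Circle symbol have the form `X' → Y'`. -/
lemma rule_inr_dc (hSNF : Δ.SNF ΓT) (hDb : IsDoubling Δb Δ) (X : Γ)
    (hd : Δ.isDiamond X ∨ Δ.isCirc X) {α' : List (Γ ⊕ Γ)}
    (h : Δb.rule (Sum.inr X) α') : ∃ Y, Δ.rule X [Y] ∧ α' = [Sum.inr Y] := by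
  obtain ⟨α₀, hr, hc⟩ := (hDb.2.2.1 X α').mp h
  have hlen := hSNF.2.1 X α₀ hd hr
  rcases hc with ⟨rfl, rfl⟩ | ⟨Y, rfl, rfl⟩ | ⟨Y, W, rfl, rfl⟩
  · simp at hlen
  · exact ⟨Y, hr, rfl⟩
  · simp at hlen

/-- Rules at an unprimed Diamond or Circle symbol have the form `X → Y`. -/
lemma rule_inl_dc (hSNF : Δ.SNF ΓT) (hDb : IsDoubling Δb Δ) (X : Γ)
    (hd : Δ.isDiamond X ∨ Δ.isCirc X) {α : List (Γ ⊕ Γ)}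
    (h : Δb.rule (Sum.inl X) α) : ∃ Y, Δ.rule X [Y] ∧ α = [Sum.inl Y] := by
  obtain ⟨α₀, hr, rfl⟩ := (hDb.2.1 X α).mp h
  have hlen := hSNF.2.1 X α₀ hd hr
  match α₀ with
  | [Y] => exact ⟨Y, hr, rfl⟩

/-- Rules at an unprimed symbol consist of unprimed symbols. -/
lemma rule_inl_unS (hDb : IsDoubling Δb Δ) (X : Γ) {α : List (Γ ⊕ Γ)}
    (h : Δb.rule (Sum.inl X) α) : α.map unS = α := by
  obtain ⟨α₀, hr, rfl⟩ := (hDb.2.1 X α).mp h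
  simp

end RuleLemmas
set_option linter.unusedSectionVars false
/-! ### A reindexing helper for `tsum` -/

section TsumHelper

variable {I : Type*}

lemma tsum_restrict_bij {f g : I → ℝ} (m : I → I) (P : I → Prop)
    (hg : ∀ a, g a = if P a then f (m a) else 0)
    (hinj : ∀ a₁ a₂, P a₁ → P a₂ → m a₁ = m a₂ → a₁ = a₂)
    (hsupp : ∀ b, f b ≠ 0 → ∃ a, P a ∧ m a = b) :
    ∑' b, f b = ∑' a, g a := by
  apply tsum_eq_tsum_of_ne_zero_bij (i := fun a => m a)
  · have key : ∀ z : Function.support g, P (z : I) := by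
      rintro ⟨a, ha⟩
      rw [Function.mem_support] at ha
      by_contra h
      rw [hg, if_neg h] at ha
      exact ha rfl
    intro x y hxy
    exact Subtype.ext (hinj _ _ (key x) (key y) hxy)
  · intro b hb
    rw [Function.mem_support] at hb
    obtain ⟨a, hP, hm⟩ := hsupp b hb
    have hga : g a ≠ 0 := by rw [hg, if_pos hP, hm]; exact hb
    exact ⟨⟨a, Function.mem_support.mpr hga⟩, hm⟩
  · rintro ⟨a, ha⟩
    rw [Function.mem_support] at ha
    have Pa : P a := by
      by_contra h; rw [hg, if_neg h] at ha; exact ha rfl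
    show f (m a) = g a
    rw [hg, if_pos Pa]

end TsumHelper

/-! ### The simulating strategies -/

section Strategies

variable {Γ : Type*} [Fintype Γ] (Δ : BPA Γ) (ΓT : Set Γ) (Δb : BPA (Γ ⊕ Γ))

/-- Box strategy for the unprimed play induced by a Box strategy of the
primed play. -/
noncomputable def sigF (σ' : Δb.Strat Δb.isBox) (w : List (List (Γ ⊕ Γ)))
    (c α : List (Γ ⊕ Γ)) : ℝ :=
  match c with
  | [] => 0
  | s :: β => if Δb.rule s α then σ'.f (w.map psiC) (psiC (s :: β)) (trR (s :: β) α)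
      else 0

lemma sigF_cons (σ' : Δb.Strat Δb.isBox) (w : List (List (Γ ⊕ Γ)))
    (s : Γ ⊕ Γ) (β α : List (Γ ⊕ Γ)) :
    sigF Δb σ' w (s :: β) α =
      if Δb.rule s α then σ'.f (w.map psiC) (psiC (s :: β)) (trR (s :: β) α)
      else 0 := rfl

lemma isBox_prS (hDb : IsDoubling Δb Δ) (s : Γ ⊕ Γ) :
    Δb.isBox (prS s) ↔ Δb.isBox s := by
  cases s with
  | inl X => simp only [prS_inl]; rw [(hDb.1 X).2.2.2.1, (hDb.1 X).1]
  | inr X => simp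

noncomputable def mkSigma (hSNF : Δ.SNF ΓT) (hDb : IsDoubling Δb Δ)
    (σ' : Δb.Strat Δb.isBox) : Δb.Strat Δb.isBox where
  f := sigF Δb σ'
  nonneg := by
    intro w c α
    cases c with
    | nil => exact le_refl 0
    | cons s β =>
      rw [sigF_cons]
      split_ifs
      · exact σ'.nonneg _ _ _
      · exact le_refl 0
  supp := by
    intro w s β α hs h
    rw [sigF_cons] at h
    by_contra hr
    rw [if_neg hr] at h
    exact h rfl
  sum_one := by
    intro w s β hs
    by_cases hβ : β = []
    · subst hβ
      -- bottom symbol: transport through `trM`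
      have hψ : psiC [s] = [prS s] := rfl
      have hs' : Δb.isBox (prS s) := (isBox_prS Δ Δb hDb s).mpr hs
      have h1 : ∑' α', σ'.f (w.map psiC) [prS s] α' = 1 :=
        σ'.sum_one (w.map psiC) (prS s) [] hs'
      have hbij : ∑' α', σ'.f (w.map psiC) [prS s] α' = ∑' α, sigF Δb σ' w [s] α := by
        apply tsum_restrict_bij (m := fun α => trM s α) (P := fun α => Δb.rule s α)
        · intro a
          rw [sigF_cons]
          split_ifs with hr
          · rw [hψ, trR_cons, if_pos rfl]
          · rfl
        · intro a₁ a₂ h₁ h₂ he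
          cases s with
          | inl X => exact trM_inj hSNF hDb X h₁ h₂ he
          | inr X => rwa [trM_inr_id hDb X h₁, trM_inr_id hDb X h₂] at he
        · intro b hb
          have hrb : Δb.rule (prS s) b := by
            cases s with
            | inl X => exact σ'.supp _ _ _ _ hs' hb
            | inr X => exact σ'.supp _ _ _ _ hs' hb
          cases s with
          | inl X => exact trM_surj hDb X hrb
          | inr X => exact ⟨b, hrb, trM_inr_id hDb X hrb⟩
      rw [← hbij, h1]
    · -- inner symbol: identity transport
      have hψ : psiC (s :: β) = s :: psiC β := by
        match β with
        | b :: t => rfl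
      have h1 : ∑' α', σ'.f (w.map psiC) (s :: psiC β) α' = 1 :=
        σ'.sum_one (w.map psiC) s (psiC β) hs
      have hbij : ∑' α', σ'.f (w.map psiC) (s :: psiC β) α' =
          ∑' α, sigF Δb σ' w (s :: β) α := by
        apply tsum_restrict_bij (m := fun α => α) (P := fun α => Δb.rule s α)
        · intro a
          rw [sigF_cons]
          split_ifs with hr
          · rw [hψ, trR_cons, if_neg hβ]
          · rfl
        · intro a₁ a₂ _ _ he; exact he
        · intro b hb
          exact ⟨b, σ'.supp _ _ _ _ hs hb, rfl⟩
      rw [← hbij, h1]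

/-- Diamond strategy for the primed play induced by a Diamond strategy of the
unprimed play. -/
noncomputable def piF (π : Δb.Strat Δb.isDiamond) (w : List (List (Γ ⊕ Γ)))
    (c α : List (Γ ⊕ Γ)) : ℝ :=
  match c with
  | [] => 0
  | s :: β => if Δb.rule s α then π.f (w.map phiC) (phiC (s :: β)) (α.map unS) else 0

lemma piF_cons (π : Δb.Strat Δb.isDiamond) (w : List (List (Γ ⊕ Γ)))
    (s : Γ ⊕ Γ) (β α : List (Γ ⊕ Γ)) :
    piF Δb π w (s :: β) α =
      if Δb.rule s α then π.f (w.map phiC) (phiC (s :: β)) (α.map unS) else 0 := rfl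

lemma isDiamond_unS (hDb : IsDoubling Δb Δ) (s : Γ ⊕ Γ) :
    Δb.isDiamond (unS s) ↔ Δb.isDiamond s := by
  cases s with
  | inl X => simp
  | inr X => simp only [unS_inr]; rw [(hDb.1 X).2.1, (hDb.1 X).2.2.2.2.1]

lemma phiC_cons (s : Γ ⊕ Γ) (β : List (Γ ⊕ Γ)) :
    phiC (s :: β) = unS s :: phiC β := rfl

noncomputable def mkPi (hSNF : Δ.SNF ΓT) (hDb : IsDoubling Δb Δ)
    (π : Δb.Strat Δb.isDiamond) : Δb.Strat Δb.isDiamond where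
  f := piF Δb π
  nonneg := by
    intro w c α
    cases c with
    | nil => exact le_refl 0
    | cons s β =>
      rw [piF_cons]
      split_ifs
      · exact π.nonneg _ _ _
      · exact le_refl 0
  supp := by
    intro w s β α hs h
    rw [piF_cons] at h
    by_contra hr
    rw [if_neg hr] at h
    exact h rfl
  sum_one := by
    intro w s β hs
    have hs' : Δb.isDiamond (unS s) := (isDiamond_unS Δ Δb hDb s).mpr hs
    have h1 : ∑' α, π.f (w.map phiC) (unS s :: phiC β) α = 1 :=
      π.sum_one (w.map phiC) (unS s) (phiC β) hs'
    have hbij : ∑' α, π.f (w.map phiC) (unS s :: phiC β) α =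
        ∑' α', piF Δb π w (s :: β) α' := by
      apply tsum_restrict_bij (m := fun α' => α'.map unS) (P := fun α' => Δb.rule s α')
      · intro a
        rw [piF_cons, phiC_cons]
      · intro a₁ a₂ h₁ h₂ he
        cases s with
        | inl X => rwa [rule_inl_unS hDb X h₁, rule_inl_unS hDb X h₂] at he
        | inr X =>
          have hd : Δ.isDiamond X := (hDb.1 X).2.2.2.2.1.mp hs
          obtain ⟨Y₁, -, rfl⟩ := rule_inr_dc hSNF hDb X (Or.inl hd) h₁
          obtain ⟨Y₂, -, rfl⟩ := rule_inr_dc hSNF hDb X (Or.inl hd) h₂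
          simpa using he
      · intro b hb
        have hrb : Δb.rule (unS s) b := π.supp _ _ _ _ hs' hb
        cases s with
        | inl X => exact ⟨b, hrb, rule_inl_unS hDb X hrb⟩
        | inr X =>
          have hd : Δ.isDiamond X := (hDb.1 X).2.2.2.2.1.mp hs
          obtain ⟨Y, hrY, rfl⟩ := rule_inl_dc hSNF hDb X (Or.inl hd) hrb
          refine ⟨[Sum.inr Y], (hDb.2.2.1 X _).mpr ⟨[Y], hrY, Or.inr (Or.inl ⟨Y, rfl, rfl⟩)⟩, ?_⟩
          simp
    rw [← hbij, h1]

end Strategies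
set_option linter.unusedSectionVars false
/-! ### Comparison of the two plays -/

section Main

variable {Γ : Type*} [Fintype Γ]

lemma mem_dt_cons {ΓT : Set Γ} {s : Γ ⊕ Γ} {β : List (Γ ⊕ Γ)} :
    (s :: β) ∈ doubledTarget ΓT ↔
      (∃ R ∈ ΓT, s = Sum.inl R) ∨ (∃ R ∈ ΓT, s = Sum.inr R) := by
  constructor
  · rintro ⟨s', β', he, h⟩
    obtain ⟨rfl, rfl⟩ : s = s' ∧ β = β' := by
      injection he with h1 h2; exact ⟨h1, h2⟩
    exact h
  · exact fun h => ⟨s, β, rfl, h⟩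

lemma memT_iff (ΓT : Set Γ) (γ : List Γ) (Z : Γ) :
    cfgR γ Z ∈ doubledTarget ΓT ↔
      cfgL γ Z ∈ doubledTarget ΓT ∪ {([] : List (Γ ⊕ Γ))} := by
  have hsing : cfgL γ Z ∉ ({([] : List (Γ ⊕ Γ))} : Set (List (Γ ⊕ Γ))) := by
    simp [cfgL]
  have hmain : cfgR γ Z ∈ doubledTarget ΓT ↔ cfgL γ Z ∈ doubledTarget ΓT := by
    cases γ with
    | nil =>
      rw [cfgR_nil, cfgL_nil, mem_dt_cons, mem_dt_cons]
      constructor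
      · rintro (⟨R, hR, hE⟩ | ⟨R, hR, hE⟩)
        · cases hE
        · have : Z = R := by injection hE
          subst this
          exact Or.inl ⟨Z, hR, rfl⟩
      · rintro (⟨R, hR, hE⟩ | ⟨R, hR, hE⟩)
        · have : Z = R := by injection hE
          subst this
          exact Or.inr ⟨Z, hR, rfl⟩
        · cases hE
    | cons W γ₂ => rw [cfgR_cons, cfgL_cons, mem_dt_cons, mem_dt_cons]
  rw [Set.mem_union]
  constructor
  · exact fun h => Or.inl (hmain.mp h)
  · rintro (h | h)
    · exact hmain.mpr h
    · exact absurd h hsing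

lemma tsum_ite_le_tsum_ite {I : Type*} {P : I → Prop} {f g h : I → ℝ}
    (hfg : ∀ a, P a → f a ≤ g a) (h0f : ∀ a, P a → 0 ≤ f a)
    (hgh : ∀ a, P a → g a ≤ h a) (h0h : ∀ a, 0 ≤ h a) (hh : Summable h) :
    ∑' a, (if P a then f a else 0) ≤ ∑' a, (if P a then g a else 0) := by
  have hsg : Summable (fun a => if P a then g a else 0) := by
    refine Summable.of_nonneg_of_le (fun a => ?_) (fun a => ?_) hh
    · split_ifs with hp
      · exact (h0f a hp).trans (hfg a hp)
      · exact le_refl 0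
    · split_ifs with hp
      · exact hgh a hp
      · exact h0h a
  refine Summable.tsum_le_tsum (fun a => ?_) ?_ hsg
  · split_ifs with hp
    · exact hfg a hp
    · exact le_rfl
  · refine Summable.of_nonneg_of_le (fun a => ?_) (fun a => ?_) hsg
    · split_ifs with hp
      · exact h0f a hp
      · exact le_refl 0
    · split_ifs with hp
      · exact hfg a hp
      · exact le_rfl

variable (Δ : BPA Γ) (ΓT : Set Γ) (Δb : BPA (Γ ⊕ Γ))

lemma main_ineq (hSNF : Δ.SNF ΓT) (hDb : IsDoubling Δb Δ)
    (π : Δb.Strat Δb.isDiamond) (σ' : Δb.Strat Δb.isBox) :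
    ∀ (n : ℕ) (γ : List Γ) (Z : Γ) (w' : List (List (Γ ⊕ Γ))),
      (w'.map phiC).map psiC = w' →
      Δb.reachN σ' (mkPi Δ ΓT Δb hSNF hDb π) (doubledTarget ΓT) n w' (cfgR γ Z) ≤
      Δb.reachN (mkSigma Δ ΓT Δb hSNF hDb σ') π
        (doubledTarget ΓT ∪ {([] : List (Γ ⊕ Γ))}) n (w'.map phiC) (cfgL γ Z) := by
  set π' := mkPi Δ ΓT Δb hSNF hDb π with hπ'
  set σc := mkSigma Δ ΓT Δb hSNF hDb σ' with hσc
  set T := doubledTarget ΓT with hT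
  set Te := doubledTarget ΓT ∪ {([] : List (Γ ⊕ Γ))} with hTe
  intro n
  induction n with
  | zero =>
    intro γ Z w' hw
    rw [Δb.reachN_zero_s17 σ' π' T, Δb.reachN_zero_s17 σc π Te]
    by_cases h : cfgR γ Z ∈ T
    · rw [if_pos h, if_pos ((memT_iff ΓT γ Z).mp h)]
    · rw [if_neg h]
      split_ifs <;> norm_num
  | succ n ih =>
    intro γ Z w' hw
    by_cases h : cfgR γ Z ∈ T
    · rw [Δb.reachN_of_mem_s17 σ' π' T _ _ h,
        Δb.reachN_of_mem_s17 σc π Te _ _ ((memT_iff ΓT γ Z).mp h)]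
    · have hL : cfgL γ Z ∉ Te := fun hc => h ((memT_iff ΓT γ Z).mpr hc)
      rw [Δb.reachN_succ_of_not_mem_s17 σ' π' T n w' h,
        Δb.reachN_succ_of_not_mem_s17 σc π Te n (w'.map phiC) hL]
      cases γ with
      | cons W γ₂ =>
        rw [cfgR_cons, cfgL_cons,
          Δb.tsum_stepP_mul σ' π' w' (Sum.inl W) (cfgR γ₂ Z),
          Δb.tsum_stepP_mul σc π (w'.map phiC) (Sum.inl W) (cfgL γ₂ Z)]
        have hφ : phiC (Sum.inl W :: cfgR γ₂ Z) = Sum.inl W :: cfgL γ₂ Z := by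
          rw [← cfgR_cons, ← cfgL_cons]; exact phiC_cfgR _ _
        have hψ : psiC (Sum.inl W :: cfgL γ₂ Z) = Sum.inl W :: cfgR γ₂ Z := by
          rw [← cfgR_cons, ← cfgL_cons]; exact psiC_cfgL _ _
        -- choices agree
        have hch : ∀ α, Δb.rule (Sum.inl W) α →
            Δb.choice σ' π' w' (Sum.inl W :: cfgR γ₂ Z) α =
            Δb.choice σc π (w'.map phiC) (Sum.inl W :: cfgL γ₂ Z) α := by
          intro α hr
          rw [BPA.choice_cons_s17, BPA.choice_cons_s17]
          split_ifs with h1 h2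
          · show σ'.f w' (Sum.inl W :: cfgR γ₂ Z) α =
              sigF Δb σ' (w'.map phiC) (Sum.inl W :: cfgL γ₂ Z) α
            rw [sigF_cons, if_pos hr, hw, hψ, trR_cons, if_neg (cfgL_ne_nil γ₂ Z)]
          · show piF Δb π w' (Sum.inl W :: cfgR γ₂ Z) α =
              π.f (w'.map phiC) (Sum.inl W :: cfgL γ₂ Z) α
            rw [piF_cons, if_pos hr, hφ, rule_inl_unS hDb W hr]
          · rfl
        refine tsum_ite_le_tsum_ite (fun α hr => ?_) (fun α hr => ?_)
          (fun α hr => ?_) (fun α => Δb.choice_nonneg_s17 σc π _ _ _)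
          (Δb.choice_summable_s17 σc π (w'.map phiC) (Sum.inl W) (cfgL γ₂ Z))
        · -- main pointwise inequality
          rw [hch α hr]
          refine mul_le_mul_of_nonneg_left ?_ (Δb.choice_nonneg_s17 σc π _ _ _)
          obtain ⟨α₀, hr₀, rfl⟩ := (hDb.2.1 W α).mp hr
          have e1 : α₀.map Sum.inl ++ cfgR γ₂ Z = cfgR (α₀ ++ γ₂) Z := by
            simp [cfgR, List.append_assoc]
          have e2 : α₀.map Sum.inl ++ cfgL γ₂ Z = cfgL (α₀ ++ γ₂) Z := by
            simp [cfgL, List.append_assoc]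
          rw [e1, e2]
          have hw2 : ((w' ++ [Sum.inl W :: cfgR γ₂ Z]).map phiC).map psiC =
              w' ++ [Sum.inl W :: cfgR γ₂ Z] := by
            simp only [List.map_append, hw, List.map_cons, List.map_nil, hφ, hψ]
          have := ih (α₀ ++ γ₂) Z (w' ++ [Sum.inl W :: cfgR γ₂ Z]) hw2
          have e3 : (w' ++ [Sum.inl W :: cfgR γ₂ Z]).map phiC =
              w'.map phiC ++ [Sum.inl W :: cfgL γ₂ Z] := by
            simp only [List.map_append, List.map_cons, List.map_nil, hφ]
          rwa [e3] at this
        · exact mul_nonneg (Δb.choice_nonneg_s17 σ' π' _ _ _)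
            (Δb.reachN_nonneg_s17 σ' π' T _ _ _)
        · exact mul_le_of_le_one_right (Δb.choice_nonneg_s17 σc π _ _ _)
            (Δb.reachN_le_one_s17 σc π Te _ _ _)
      | nil =>
        rw [cfgR_nil, cfgL_nil,
          Δb.tsum_stepP_mul σ' π' w' (Sum.inr Z) [],
          Δb.tsum_stepP_mul σc π (w'.map phiC) (Sum.inl Z) []]
        have hrew : (∑' α', if Δb.rule (Sum.inr Z) α' then
              Δb.choice σ' π' w' [Sum.inr Z] α' *
              Δb.reachN σ' π' T n (w' ++ [[Sum.inr Z]]) (α' ++ []) else 0) =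
            ∑' α, if Δb.rule (Sum.inl Z) α then
              (if Δb.rule (Sum.inr Z) (trM (Sum.inl Z) α) then
                Δb.choice σ' π' w' [Sum.inr Z] (trM (Sum.inl Z) α) *
                Δb.reachN σ' π' T n (w' ++ [[Sum.inr Z]]) (trM (Sum.inl Z) α ++ [])
              else 0) else 0 := by
          apply tsum_restrict_bij (m := trM (Sum.inl Z))
            (P := fun α => Δb.rule (Sum.inl Z) α)
          · intro a; rfl
          · exact fun a₁ a₂ h₁ h₂ he => trM_inj hSNF hDb Z h₁ h₂ he
          · intro b hb
            have hrb : Δb.rule (Sum.inr Z) b := by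
              by_contra hnr
              rw [if_neg hnr] at hb
              exact hb rfl
            exact trM_surj hDb Z hrb
        rw [hrew]
        simp only [List.append_nil]
        -- choices agree through the transport
        have hch : ∀ α, Δb.rule (Sum.inl Z) α →
            Δb.choice σ' π' w' [Sum.inr Z] (trM (Sum.inl Z) α) =
            Δb.choice σc π (w'.map phiC) [Sum.inl Z] α := by
          intro α hr
          rw [BPA.choice_cons_s17, BPA.choice_cons_s17]
          have hBB : Δb.isBox (Sum.inr Z) ↔ Δb.isBox (Sum.inl Z) :=
            (hDb.1 Z).2.2.2.1.trans (hDb.1 Z).1.symm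
          have hDD : Δb.isDiamond (Sum.inr Z) ↔ Δb.isDiamond (Sum.inl Z) :=
            (hDb.1 Z).2.2.2.2.1.trans (hDb.1 Z).2.1.symm
          by_cases h1 : Δb.isBox (Sum.inl Z)
          · rw [if_pos h1, if_pos (hBB.mpr h1)]
            show σ'.f w' [Sum.inr Z] (trM (Sum.inl Z) α) =
              sigF Δb σ' (w'.map phiC) [Sum.inl Z] α
            have hps : psiC [Sum.inl Z] = [Sum.inr Z] := rfl
            rw [sigF_cons, if_pos hr, hw, hps, trR_cons, if_pos rfl]
          · rw [if_neg h1, if_neg (fun hc => h1 (hBB.mp hc))]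
            by_cases h2 : Δb.isDiamond (Sum.inl Z)
            · rw [if_pos h2, if_pos (hDD.mpr h2)]
              have hd : Δ.isDiamond Z := (hDb.1 Z).2.1.mp h2
              obtain ⟨Y, hrY, rfl⟩ := rule_inl_dc hSNF hDb Z (Or.inl hd) hr
              have hrm : Δb.rule (Sum.inr Z) (trM (Sum.inl Z) [Sum.inl Y]) :=
                trM_maps hDb Z _ hr
              show piF Δb π w' [Sum.inr Z] (trM (Sum.inl Z) [Sum.inl Y]) =
                π.f (w'.map phiC) [Sum.inl Z] [Sum.inl Y]
              rw [piF_cons, if_pos hrm, trM_single]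
              simp [phiC]
            · rw [if_neg h2, if_neg (fun hc => h2 (hDD.mp hc))]
              have hc : Δ.isCirc Z := by
                have := (Δb.cover (Sum.inl Z)).resolve_left h1 |>.resolve_left h2
                exact (hDb.1 Z).2.2.1.mp this
              obtain ⟨Y, hrY, rfl⟩ := rule_inl_dc hSNF hDb Z (Or.inr hc) hr
              rw [trM_single, prS_inl]
              rw [(hDb.2.2.2 Z Y hc).1, (hDb.2.2.2 Z Y hc).2]
        refine tsum_ite_le_tsum_ite (fun α hr => ?_) (fun α hr => ?_)
          (fun α hr => ?_) (fun α => Δb.choice_nonneg_s17 σc π _ _ _)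
          (Δb.choice_summable_s17 σc π (w'.map phiC) (Sum.inl Z) [])
        · -- main pointwise inequality
          rw [if_pos (trM_maps hDb Z α hr), hch α hr]
          refine mul_le_mul_of_nonneg_left ?_ (Δb.choice_nonneg_s17 σc π _ _ _)
          have hw2 : ((w' ++ [[Sum.inr Z]]).map phiC).map psiC = w' ++ [[Sum.inr Z]] := by
            simp only [List.map_append, hw, List.map_cons, List.map_nil]
            rfl
          have e3 : (w' ++ [[Sum.inr Z]]).map phiC = w'.map phiC ++ [[Sum.inl Z]] := by
            simp only [List.map_append, List.map_cons, List.map_nil]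
            rfl
          obtain ⟨α₀, hr₀, rfl⟩ := (hDb.2.1 Z α).mp hr
          rcases rule_cases hr₀ with rfl | ⟨Y, rfl⟩ | ⟨Y, W, rfl⟩
          · -- termination rule: the unprimed play reaches `ε ∈ Te`
            have hmem : ([] : List (Γ ⊕ Γ)) ∈ Te := Or.inr rfl
            rw [show (([] : List Γ).map (Sum.inl (β := Γ))) = ([] : List (Γ ⊕ Γ)) from rfl,
              Δb.reachN_of_mem_s17 σc π Te n _ hmem]
            simpa using Δb.reachN_le_one_s17 σ' π' T n (w' ++ [[Sum.inr Z]])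
              (trM (Sum.inl Z) [])
          · -- rule `Z → Y`
            have := ih [] Y (w' ++ [[Sum.inr Z]]) hw2
            rw [e3] at this
            simpa using this
          · -- rule `Z → Y W`
            have := ih [Y] W (w' ++ [[Sum.inr Z]]) hw2
            rw [e3] at this
            simpa [cfgR, cfgL] using this
        · rw [if_pos (trM_maps hDb Z α hr)]
          exact mul_nonneg (Δb.choice_nonneg_s17 σ' π' _ _ _)
            (Δb.reachN_nonneg_s17 σ' π' T _ _ _)
        · exact mul_le_of_le_one_right (Δb.choice_nonneg_s17 σc π _ _ _)
            (Δb.reachN_le_one_s17 σc π Te _ _ _)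

end Main
/-- In the doubled game, if `X ∈ W_Diamond(T_ε,<1)` then `X' ∈ W_Diamond(T,<1)`. -/
theorem doubled_WDiaLtOne {Γ : Type*} [Fintype Γ] (Δ : BPA Γ) (ΓT : Set Γ)
    (hSNF : Δ.SNF ΓT) (Δb : BPA (Γ ⊕ Γ)) (hDb : IsDoubling Δb Δ) (X : Γ)
    (hX : [Sum.inl X] ∈
        Δb.WDiaLtOne (doubledTarget ΓT ∪ {([] : List (Γ ⊕ Γ))})) :
    [Sum.inr X] ∈ Δb.WDiaLtOne (doubledTarget ΓT) := by
  obtain ⟨π, hπ⟩ := hX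
  refine ⟨mkPi Δ ΓT Δb hSNF hDb π, fun σ' => ?_⟩
  have hle : Δb.reachP σ' (mkPi Δ ΓT Δb hSNF hDb π) (doubledTarget ΓT) [Sum.inr X] ≤
      Δb.reachP (mkSigma Δ ΓT Δb hSNF hDb σ') π
        (doubledTarget ΓT ∪ {([] : List (Γ ⊕ Γ))}) [Sum.inl X] := by
    refine ciSup_mono ⟨1, ?_⟩ ?_
    · rintro y ⟨n, rfl⟩
      exact Δb.reachN_le_one_s17 _ π _ n [] _
    · intro n
      have := main_ineq Δ ΓT Δb hSNF hDb π σ' n [] X [] (by simp)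
      simpa using this
  exact lt_of_le_of_lt hle (hπ _)
end
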